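/- arXiv:2310.16597 — 3 statements merged into one kernel-verified Lean document; each statement's English description precedes it below -/
import Mathlib

section
/- Consider a fully connected network with preactivations h_i^{(ℓ)}(x)[n] = Σ_{j=1}^{N_{ℓ-1}[n]} W_{ij}^{(ℓ)} z_j^{(ℓ-1)}(x)[n] + b_i^{(ℓ)}, z_j^{(ℓ)} = φ(h_j^{(ℓ)}), where every weight matrix W^{(ℓ)} (for ℓ ≥ 2) is row-exchangeable and column-exchangeable, W^{(1)} is row-exchangeable, all weight matrices and bias vectors across layers are mutually independent, and the biases b^{(ℓ)} have iid entries. Fix a layer ℓ ≥ 2, a finite index set L of pairs (i,x) of neuron index and input, coefficients α = (α_{(i,x)})_{(i,x)∈L}, and let ε_{ij}^{(ℓ)} = σ_W^{-1} √(N_{ℓ-1}) W_{ij}^{(ℓ)}. Then the random variables γ_j^{(ℓ)}(α, L)[n] = σ_W Σ_{(i,x)∈L} α_{(i,x)} ε_{ij}^{(ℓ)} z_j^{(ℓ-1)}(x)[n], indexed by j = 1, …, N_{ℓ-1}[n], are exchangeable: for any permutation σ of {1,…,N_{ℓ-1}[n]}, the joint distribution of (γ_{σ(j)}^{(ℓ)})_j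 equals that of (γ_j^{(ℓ)})_j. -/
open MeasureTheory ProbabilityTheory Finset

noncomputable section

variable {Ω : Type*} [MeasureSpace Ω]

/-- A random matrix field `W : ℕ → ℕ → Ω → ℝ` with `m` relevant rows is row-exchangeable
if its joint distribution is invariant under any permutation of its (first `m`) rows. -/
def RowExchangeable (W : ℕ → ℕ → Ω → ℝ) (m : ℕ) : Prop :=
  ∀ σ : Equiv.Perm ℕ, (∀ i, m ≤ i → σ i = i) →
    IdentDistrib (fun ω => fun i j : ℕ => W (σ i) j ω)
      (fun ω => fun i j : ℕ => W i j ω) volume volume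

/-- Column-exchangeability of a random matrix field with `nc` relevant columns. -/
def ColExchangeable (W : ℕ → ℕ → Ω → ℝ) (nc : ℕ) : Prop :=
  ∀ σ : Equiv.Perm ℕ, (∀ j, nc ≤ j → σ j = j) →
    IdentDistrib (fun ω => fun i j : ℕ => W i (σ j) ω)
      (fun ω => fun i j : ℕ => W i j ω) volume volume

/-- The index type for the joint family of per-layer weight matrices (`Sum.inl ℓ`) and
per-layer bias vectors (`Sum.inr ℓ`). -/
def netFieldType : ℕ ⊕ ℕ → Type :=
  Sum.elim (fun _ => ℕ → ℕ → ℝ) (fun _ => ℕ → ℝ)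

instance netFieldTypeMeasurableSpace : ∀ k, MeasurableSpace (netFieldType k)
  | Sum.inl _ => inferInstanceAs (MeasurableSpace (ℕ → ℕ → ℝ))
  | Sum.inr _ => inferInstanceAs (MeasurableSpace (ℕ → ℝ))

/-- The joint family of per-layer weight matrices and per-layer bias vectors. -/
def netFields (W : ℕ → ℕ → ℕ → Ω → ℝ) (b : ℕ → ℕ → Ω → ℝ) :
    (k : ℕ ⊕ ℕ) → Ω → netFieldType k
  | Sum.inl ℓ => fun ω i j => W ℓ i j ω
  | Sum.inr ℓ => fun ω i => b ℓ i ω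

/-! ### Auxiliary material -/

/-- Deterministic evaluation of the preactivations from given weight and bias fields. -/
def netH {𝒳 : Type*} (emb : 𝒳 → ℕ → ℝ) (φ : ℝ → ℝ) (Nn : ℕ → ℕ)
    (Wf : ℕ → ℕ → ℕ → ℝ) (bf : ℕ → ℕ → ℝ) : ℕ → ℕ → 𝒳 → ℝ
  | 0, _, _ => 0
  | 1, i, x => (∑ j ∈ Finset.range (Nn 0), Wf 1 i j * emb x j) + bf 1 i
  | k + 2, i, x =>
      (∑ j ∈ Finset.range (Nn (k + 1)), Wf (k + 2) i j * φ (netH emb φ Nn Wf bf (k + 1) j x))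
        + bf (k + 2) i

lemma measurable_netH {𝒳 : Type*} (emb : 𝒳 → ℕ → ℝ) {φ : ℝ → ℝ} (hφ : Measurable φ) (Nn : ℕ → ℕ) :
    ∀ (k : ℕ) (i : ℕ) (x : 𝒳),
      Measurable (fun p : (ℕ → ℕ → ℕ → ℝ) × (ℕ → ℕ → ℝ) => netH emb φ Nn p.1 p.2 k i x) := by
  have hWev : ∀ a c d, Measurable fun p : (ℕ → ℕ → ℕ → ℝ) × (ℕ → ℕ → ℝ) => p.1 a c d :=
    fun a c d => (measurable_pi_apply d).comp
      ((measurable_pi_apply c).comp ((measurable_pi_apply a).comp measurable_fst))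
  have hbev : ∀ a c, Measurable fun p : (ℕ → ℕ → ℕ → ℝ) × (ℕ → ℕ → ℝ) => p.2 a c :=
    fun a c => (measurable_pi_apply c).comp ((measurable_pi_apply a).comp measurable_snd)
  intro k
  induction k using Nat.strong_induction_on with
  | _ k ih =>
    rcases k with _ | _ | k
    · intro i x; simp only [netH]; exact measurable_const
    · intro i x
      simp only [netH]
      exact (Finset.measurable_sum _ fun j _ => (hWev 1 i j).mul_const _).add (hbev 1 i)
    · intro i x
      simp only [netH]
      exact (Finset.measurable_sum _ fun j _ =>
        (hWev (k + 2) i j).mul (hφ.comp (ih (k + 1) (by omega) j x))).add (hbev (k + 2) i)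

/-- Permutation invariance of the joint law of an iid family. -/
theorem perm_iid_map_eq [IsProbabilityMeasure (volume : Measure Ω)]
    (g : ℕ → Ω → ℝ) (hg : ∀ i, Measurable (g i))
    (hind : iIndepFun g volume)
    (hid : ∀ i i', IdentDistrib (g i) (g i') volume volume) (σ : Equiv.Perm ℕ) :
    Measure.map (fun ω => fun i : ℕ => g (σ i) ω) volume =
      Measure.map (fun ω => fun i : ℕ => g i ω) volume := by
  have hmX : Measurable fun ω => fun i : ℕ => g (σ i) ω :=
    measurable_pi_lambda _ fun i => hg _
  have hmY : Measurable fun ω => fun i : ℕ => g i ω :=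
    measurable_pi_lambda _ fun i => hg _
  haveI := Measure.isProbabilityMeasure_map (μ := volume) hmX.aemeasurable
  haveI := Measure.isProbabilityMeasure_map (μ := volume) hmY.aemeasurable
  refine MeasureTheory.ext_of_generate_finite _ generateFrom_squareCylinders.symm
    (isPiSystem_squareCylinders (fun _ => MeasurableSpace.isPiSystem_measurableSet)
      (fun _ => Set.mem_setOf_eq ▸ MeasurableSet.univ)) ?_ ?_
  · rintro S ⟨s, t, ht, rfl⟩
    simp only [Set.mem_univ_pi, Set.mem_setOf_eq] at ht
    have hSmeas : MeasurableSet ((s : Set ℕ).pi t) :=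
      MeasurableSet.pi (Finset.countable_toSet _) fun i _ => ht i
    rw [Measure.map_apply hmX hSmeas, Measure.map_apply hmY hSmeas]
    have hpre1 : (fun ω => fun i : ℕ => g (σ i) ω) ⁻¹' ((s : Set ℕ).pi t) =
        ⋂ k ∈ Finset.image (fun i => σ i) s, g k ⁻¹' t (σ.symm k) := by
      ext ω
      simp only [Set.mem_preimage, Set.mem_pi, Finset.mem_coe, Set.mem_iInter,
        Finset.mem_image, forall_exists_index, and_imp]
      constructor
      · rintro hh k i hi rfl
        rw [Equiv.symm_apply_apply]; exact hh i hi
      · intro hh i hi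
        have := hh (σ i) i hi rfl; rwa [Equiv.symm_apply_apply] at this
    have hpre2 : (fun ω => fun i : ℕ => g i ω) ⁻¹' ((s : Set ℕ).pi t) =
        ⋂ k ∈ s, g k ⁻¹' t k := by
      ext ω
      simp [Set.mem_pi]
    rw [hpre1, hpre2,
      hind.measure_inter_preimage_eq_mul (Finset.image (fun i => σ i) s)
        (sets := fun k => t (σ.symm k)) (fun k _ => ht _),
      hind.measure_inter_preimage_eq_mul s (sets := t) (fun i _ => ht i),
      Finset.prod_image (fun a _ b _ hab => σ.injective hab)]
    refine Finset.prod_congr rfl fun i _ => ?_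
    rw [Equiv.symm_apply_apply]
    exact (hid (σ i) i).measure_mem_eq (ht i)
  · simp

/-- Two pairs with independent, componentwise identically distributed entries have the
same joint law. -/
theorem map_pair_eq {β γ : Type*} [MeasurableSpace β] [MeasurableSpace γ]
    [IsProbabilityMeasure (volume : Measure Ω)]
    {X X' : Ω → β} {Y Y' : Ω → γ}
    (hX : Measurable X) (hX' : Measurable X') (hY : Measurable Y) (hY' : Measurable Y')
    (h1 : IndepFun X Y volume) (h2 : IndepFun X' Y' volume)
    (hXe : Measure.map X' volume = Measure.map X volume)
    (hYe : Measure.map Y' volume = Measure.map Y volume) :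
    Measure.map (fun ω => (X' ω, Y' ω)) volume = Measure.map (fun ω => (X ω, Y ω)) volume := by
  rw [(indepFun_iff_map_prod_eq_prod_map_map hX'.aemeasurable hY'.aemeasurable).mp h2,
    (indepFun_iff_map_prod_eq_prod_map_map hX.aemeasurable hY.aemeasurable).mp h1, hXe, hYe]

/-- Exchangeability of the summands `γ_j^{(ℓ)}(α, L)[n]` appearing in the exchangeable-CLT
argument for fully connected networks with row- and column-exchangeable weights,
mutually independent layers and iid bias entries. -/
theorem gamma_summands_exchangeable
    [IsProbabilityMeasure (volume : Measure Ω)]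
    {𝒳 : Type*} (emb : 𝒳 → ℕ → ℝ) (φ : ℝ → ℝ) (hφ : Measurable φ)
    (σW : ℝ) (N : ℕ → ℕ → ℕ)
    (W : ℕ → ℕ → ℕ → ℕ → Ω → ℝ) (b : ℕ → ℕ → Ω → ℝ)
    (hWmeas : ∀ n ℓ i j, Measurable (W n ℓ i j))
    (hbmeas : ∀ ℓ i, Measurable (b ℓ i))
    -- every weight matrix at layer ℓ ≥ 2 is row- and column-exchangeable
    (hexch : ∀ n ℓ', 2 ≤ ℓ' →
      RowExchangeable (W n ℓ') (N ℓ' n) ∧ ColExchangeable (W n ℓ') (N (ℓ' - 1) n))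
    -- the first-layer weight matrix is row-exchangeable
    (hexch1 : ∀ n, RowExchangeable (W n 1) (N 1 n))
    -- all weight matrices and bias vectors across layers are mutually independent
    (hindep : ∀ n, iIndepFun (netFields (W n) b) volume)
    -- the biases have iid entries
    (hbiid : ∀ ℓ, iIndepFun (fun i => b ℓ i) volume)
    (hbid : ∀ ℓ i i', IdentDistrib (b ℓ i) (b ℓ i') volume volume)
    -- the preactivations h satisfy the fully connected recursion
    (h : ℕ → ℕ → ℕ → 𝒳 → Ω → ℝ)
    (hrec1 : ∀ n i x ω,
      h n 1 i x ω = (∑ j ∈ Finset.range (N 0 n), W n 1 i j ω * emb x j) + b 1 i ω)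
    (hrec : ∀ n ℓ', 1 ≤ ℓ' → ∀ i x ω,
      h n (ℓ' + 1) i x ω =
        (∑ j ∈ Finset.range (N ℓ' n), W n (ℓ' + 1) i j ω * φ (h n ℓ' j x ω)) + b (ℓ' + 1) i ω)
    -- a fixed layer ℓ ≥ 2, finite index set L = {(idx p, inp p)} and coefficients α
    (ℓ : ℕ) (hℓ : 2 ≤ ℓ)
    (P : ℕ) (idx : Fin P → ℕ) (inp : Fin P → 𝒳) (α : Fin P → ℝ) :
    -- the summands γ_j are exchangeable over j ∈ {1, …, N_{ℓ-1}[n]}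
    ∀ n, ∀ σ : Equiv.Perm ℕ, (∀ j, N (ℓ - 1) n ≤ j → σ j = j) →
      IdentDistrib
        (fun ω => fun j : ℕ =>
          σW * ∑ p, α p * (σW⁻¹ * Real.sqrt (N (ℓ - 1) n) * W n ℓ (idx p) (σ j) ω) *
            φ (h n (ℓ - 1) (σ j) (inp p) ω))
        (fun ω => fun j : ℕ =>
          σW * ∑ p, α p * (σW⁻¹ * Real.sqrt (N (ℓ - 1) n) * W n ℓ (idx p) j ω) *
            φ (h n (ℓ - 1) j (inp p) ω))
        volume volume := by
  classical
  intro n σ hσ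
  obtain ⟨m, rfl⟩ : ∃ m, ℓ = m + 2 := ⟨ℓ - 2, by omega⟩
  have h21 : m + 2 - 1 = m + 1 := by omega
  rw [h21] at hσ
  simp only [h21]
  -- the random fields involved
  set Nn : ℕ → ℕ := fun t => N t n with hNn
  set X1 : Ω → ℕ → ℕ → ℝ := fun ω i j => W n (m + 2) i j ω with hX1
  set X1' : Ω → ℕ → ℕ → ℝ := fun ω i j => W n (m + 2) i (σ j) ω with hX1'
  set X2 : Ω → ℕ → ℕ → ℝ := fun ω i j => W n (m + 1) i j ω with hX2
  set X2' : Ω → ℕ → ℕ → ℝ := fun ω i j => W n (m + 1) (σ i) j ω with hX2'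
  set X3 : Ω → ℕ → ℝ := fun ω i => b (m + 1) i ω with hX3
  set X3' : Ω → ℕ → ℝ := fun ω i => b (m + 1) (σ i) ω with hX3'
  set R : Ω → (ℕ → ℕ → ℕ → ℝ) × (ℕ → ℕ → ℝ) :=
    fun ω => (fun k i j => if k < m + 1 then W n k i j ω else 0,
              fun k i => if k < m + 1 then b k i ω else 0) with hR
  -- measurability
  have hX1m : Measurable X1 :=
    measurable_pi_lambda _ fun i => measurable_pi_lambda _ fun j => hWmeas n _ i j
  have hX1'm : Measurable X1' :=
    measurable_pi_lambda _ fun i => measurable_pi_lambda _ fun j => hWmeas n _ i (σ j)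
  have hX2m : Measurable X2 :=
    measurable_pi_lambda _ fun i => measurable_pi_lambda _ fun j => hWmeas n _ i j
  have hX2'm : Measurable X2' :=
    measurable_pi_lambda _ fun i => measurable_pi_lambda _ fun j => hWmeas n _ (σ i) j
  have hX3m : Measurable X3 := measurable_pi_lambda _ fun i => hbmeas _ i
  have hX3'm : Measurable X3' := measurable_pi_lambda _ fun i => hbmeas _ (σ i)
  have hRm : Measurable R := by
    refine Measurable.prod ?_ ?_
    · refine measurable_pi_lambda _ fun k => measurable_pi_lambda _ fun i =>
        measurable_pi_lambda _ fun j => ?_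
      simp only [hR]
      split_ifs
      exacts [hWmeas n k i j, measurable_const]
    · refine measurable_pi_lambda _ fun k => measurable_pi_lambda _ fun i => ?_
      simp only [hR]
      split_ifs
      exacts [hbmeas k i, measurable_const]
  have hFamM : ∀ i, Measurable (netFields (W n) b i) := by
    rintro (k | k)
    · exact measurable_pi_lambda _ fun i => measurable_pi_lambda _ fun j => hWmeas n k i j
    · exact measurable_pi_lambda _ fun i => hbmeas k i
  -- independence
  set Tlow : Finset (ℕ ⊕ ℕ) :=
    ((Finset.range (m + 1)).image Sum.inl) ∪ ((Finset.range (m + 1)).image Sum.inr) with hTlow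
  have hI3 : IndepFun X3 R volume := by
    have base := (hindep n).indepFun_finset {Sum.inr (m + 1)} Tlow
      (by simp [hTlow, Finset.disjoint_left]) hFamM
    have g1m : Measurable fun v : (i : ({Sum.inr (m + 1)} : Finset (ℕ ⊕ ℕ))) → netFieldType i =>
        v ⟨Sum.inr (m + 1), by simp⟩ := measurable_pi_apply _
    have g2m : Measurable fun v : (i : Tlow) → netFieldType i =>
        ((fun k i j => if hk : k < m + 1 then v ⟨Sum.inl k, by simp [hTlow, hk]; omega⟩ i j else 0,
          fun k i => if hk : k < m + 1 then v ⟨Sum.inr k, by simp [hTlow, hk]; omega⟩ i else 0) :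
          (ℕ → ℕ → ℕ → ℝ) × (ℕ → ℕ → ℝ)) := by
      refine Measurable.prod ?_ ?_
      · refine measurable_pi_lambda _ fun k => measurable_pi_lambda _ fun i =>
          measurable_pi_lambda _ fun j => ?_
        by_cases hk : k < m + 1
        · simp only [dif_pos hk]
          exact (measurable_pi_apply j).comp
            ((measurable_pi_apply i).comp (measurable_pi_apply _))
        · simp only [dif_neg hk]; exact measurable_const
      · refine measurable_pi_lambda _ fun k => measurable_pi_lambda _ fun i => ?_
        by_cases hk : k < m + 1
        · simp only [dif_pos hk]
          exact (measurable_pi_apply i).comp (measurable_pi_apply _)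
        · simp only [dif_neg hk]; exact measurable_const
    exact base.comp g1m g2m
  have hI2 : IndepFun X2 (fun ω => (X3 ω, R ω)) volume := by
    have base := (hindep n).indepFun_finset {Sum.inl (m + 1)} (insert (Sum.inr (m + 1)) Tlow)
      (by simp [hTlow, Finset.disjoint_left]) hFamM
    have g1m : Measurable fun v : (i : ({Sum.inl (m + 1)} : Finset (ℕ ⊕ ℕ))) → netFieldType i =>
        v ⟨Sum.inl (m + 1), by simp⟩ := measurable_pi_apply _
    have g2m : Measurable fun v : (i : (insert (Sum.inr (m + 1)) Tlow : Finset (ℕ ⊕ ℕ))) →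
          netFieldType i =>
        ((v ⟨Sum.inr (m + 1), by simp⟩,
          ((fun k i j => if hk : k < m + 1 then
              v ⟨Sum.inl k, by simp [hTlow, hk]; omega⟩ i j else 0,
            fun k i => if hk : k < m + 1 then
              v ⟨Sum.inr k, by simp [hTlow, hk]; omega⟩ i else 0) :
            (ℕ → ℕ → ℕ → ℝ) × (ℕ → ℕ → ℝ))) : (ℕ → ℝ) × ((ℕ → ℕ → ℕ → ℝ) × (ℕ → ℕ → ℝ))) := by
      refine Measurable.prod (measurable_pi_apply _) ?_
      refine Measurable.prod ?_ ?_
      · refine measurable_pi_lambda _ fun k => measurable_pi_lambda _ fun i =>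
          measurable_pi_lambda _ fun j => ?_
        by_cases hk : k < m + 1
        · simp only [dif_pos hk]
          exact (measurable_pi_apply j).comp
            ((measurable_pi_apply i).comp (measurable_pi_apply _))
        · simp only [dif_neg hk]; exact measurable_const
      · refine measurable_pi_lambda _ fun k => measurable_pi_lambda _ fun i => ?_
        by_cases hk : k < m + 1
        · simp only [dif_pos hk]
          exact (measurable_pi_apply i).comp (measurable_pi_apply _)
        · simp only [dif_neg hk]; exact measurable_const
    exact base.comp g1m g2m
  have hI1 : IndepFun X1 (fun ω => (X2 ω, (X3 ω, R ω))) volume := by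
    have base := (hindep n).indepFun_finset {Sum.inl (m + 2)}
      (insert (Sum.inl (m + 1)) (insert (Sum.inr (m + 1)) Tlow))
      (by simp [hTlow, Finset.disjoint_left]) hFamM
    have g1m : Measurable fun v : (i : ({Sum.inl (m + 2)} : Finset (ℕ ⊕ ℕ))) → netFieldType i =>
        v ⟨Sum.inl (m + 2), by simp⟩ := measurable_pi_apply _
    have g2m : Measurable fun v :
          (i : (insert (Sum.inl (m + 1)) (insert (Sum.inr (m + 1)) Tlow) : Finset (ℕ ⊕ ℕ))) →
          netFieldType i =>
        ((v ⟨Sum.inl (m + 1), by simp⟩,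
          (v ⟨Sum.inr (m + 1), by simp⟩,
          ((fun k i j => if hk : k < m + 1 then
              v ⟨Sum.inl k, by simp [hTlow, hk]; omega⟩ i j else 0,
            fun k i => if hk : k < m + 1 then
              v ⟨Sum.inr k, by simp [hTlow, hk]; omega⟩ i else 0) :
            (ℕ → ℕ → ℕ → ℝ) × (ℕ → ℕ → ℝ)))) :
          (ℕ → ℕ → ℝ) × ((ℕ → ℝ) × ((ℕ → ℕ → ℕ → ℝ) × (ℕ → ℕ → ℝ)))) := by
      refine Measurable.prod (measurable_pi_apply _) ?_
      refine Measurable.prod (measurable_pi_apply _) ?_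
      refine Measurable.prod ?_ ?_
      · refine measurable_pi_lambda _ fun k => measurable_pi_lambda _ fun i =>
          measurable_pi_lambda _ fun j => ?_
        by_cases hk : k < m + 1
        · simp only [dif_pos hk]
          exact (measurable_pi_apply j).comp
            ((measurable_pi_apply i).comp (measurable_pi_apply _))
        · simp only [dif_neg hk]; exact measurable_const
      · refine measurable_pi_lambda _ fun k => measurable_pi_lambda _ fun i => ?_
        by_cases hk : k < m + 1
        · simp only [dif_pos hk]
          exact (measurable_pi_apply i).comp (measurable_pi_apply _)
        · simp only [dif_neg hk]; exact measurable_const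
    exact base.comp g1m g2m
  -- independence for the permuted fields
  have hI3' : IndepFun X3' R volume := by
    have hc : Measurable fun u : ℕ → ℝ => fun i => u (σ i) :=
      measurable_pi_lambda _ fun i => measurable_pi_apply _
    exact hI3.comp hc measurable_id
  have hI2' : IndepFun X2' (fun ω => (X3' ω, R ω)) volume := by
    have hc2 : Measurable fun u : ℕ → ℕ → ℝ => fun i => u (σ i) :=
      measurable_pi_lambda _ fun i => measurable_pi_apply _
    have hc3 : Measurable fun q : (ℕ → ℝ) × ((ℕ → ℕ → ℕ → ℝ) × (ℕ → ℕ → ℝ)) =>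
        ((fun i => q.1 (σ i)), q.2) := by
      refine Measurable.prod ?_ measurable_snd
      exact measurable_pi_lambda _ fun i => (measurable_pi_apply (σ i)).comp measurable_fst
    exact hI2.comp hc2 hc3
  have hI1' : IndepFun X1' (fun ω => (X2' ω, (X3' ω, R ω))) volume := by
    have hc1 : Measurable fun u : ℕ → ℕ → ℝ => (fun i j => u i (σ j)) :=
      measurable_pi_lambda _ fun i => measurable_pi_lambda _ fun j =>
        (measurable_pi_apply (σ j)).comp (measurable_pi_apply i)
    have hc2 : Measurable fun q : (ℕ → ℕ → ℝ) × ((ℕ → ℝ) × ((ℕ → ℕ → ℕ → ℝ) × (ℕ → ℕ → ℝ))) =>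
        ((fun i j => q.1 (σ i) j), ((fun i => q.2.1 (σ i)), q.2.2)) := by
      fun_prop
    exact hI1.comp hc1 hc2
  -- marginal laws agree
  have hσ' : ∀ j, N (m + 2 - 1) n ≤ j → σ j = j := by rw [h21]; exact hσ
  have hm1 : Measure.map X1' volume = Measure.map X1 volume :=
    ((hexch n (m + 2) (by omega)).2 σ hσ').map_eq
  have hrow : RowExchangeable (W n (m + 1)) (N (m + 1) n) := by
    rcases m with _ | m'
    · exact hexch1 n
    · exact (hexch n (m' + 2) (by omega)).1
  have hm2 : Measure.map X2' volume = Measure.map X2 volume := (hrow σ hσ).map_eq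
  have hm3 : Measure.map X3' volume = Measure.map X3 volume :=
    perm_iid_map_eq (b (m + 1)) (hbmeas _) (hbiid (m + 1)) (fun i i' => hbid _ i i') σ
  -- joint laws agree
  have h23 : Measure.map (fun ω => (X3' ω, R ω)) volume
      = Measure.map (fun ω => (X3 ω, R ω)) volume :=
    map_pair_eq hX3m hX3'm hRm hRm hI3 hI3' hm3 rfl
  have h2' : Measure.map (fun ω => (X2' ω, (X3' ω, R ω))) volume
      = Measure.map (fun ω => (X2 ω, (X3 ω, R ω))) volume :=
    map_pair_eq hX2m hX2'm (hX3m.prodMk hRm) (hX3'm.prodMk hRm) hI2 hI2' hm2 h23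
  have hQ : Measure.map (fun ω => (X1' ω, (X2' ω, (X3' ω, R ω)))) volume
      = Measure.map (fun ω => (X1 ω, (X2 ω, (X3 ω, R ω)))) volume :=
    map_pair_eq hX1m hX1'm (hX2m.prodMk (hX3m.prodMk hRm))
      (hX2'm.prodMk (hX3'm.prodMk hRm)) hI1 hI1' hm1 h2'
  have hQm : Measurable fun ω => (X1 ω, (X2 ω, (X3 ω, R ω))) :=
    hX1m.prodMk (hX2m.prodMk (hX3m.prodMk hRm))
  have hQ'm : Measurable fun ω => (X1' ω, (X2' ω, (X3' ω, R ω))) :=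
    hX1'm.prodMk (hX2'm.prodMk (hX3'm.prodMk hRm))
  have hID : IdentDistrib (fun ω => (X1' ω, (X2' ω, (X3' ω, R ω))))
      (fun ω => (X1 ω, (X2 ω, (X3 ω, R ω)))) volume volume :=
    ⟨hQ'm.aemeasurable, hQm.aemeasurable, hQ⟩
  -- the function producing the γ's from the fields
  set G : (ℕ → ℕ → ℝ) × ((ℕ → ℕ → ℝ) × ((ℕ → ℝ) × ((ℕ → ℕ → ℕ → ℝ) × (ℕ → ℕ → ℝ)))) → ℕ → ℝ :=
    fun q j => σW * ∑ p, α p * (σW⁻¹ * Real.sqrt (N (m + 1) n) * q.1 (idx p) j) *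
      φ (netH emb φ Nn (fun k => if k = m + 1 then q.2.1 else q.2.2.2.1 k)
          (fun k => if k = m + 1 then q.2.2.1 else q.2.2.2.2 k) (m + 1) j (inp p)) with hG
  have hGm : Measurable G := by
    refine measurable_pi_lambda _ fun j => ?_
    rw [hG]
    refine Measurable.const_mul ?_ σW
    refine Finset.measurable_sum _ fun p _ => ?_
    have h1 : Measurable fun q :
        (ℕ → ℕ → ℝ) × ((ℕ → ℕ → ℝ) × ((ℕ → ℝ) × ((ℕ → ℕ → ℕ → ℝ) × (ℕ → ℕ → ℝ)))) =>
        q.1 (idx p) j :=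
      (measurable_pi_apply j).comp ((measurable_pi_apply (idx p)).comp measurable_fst)
    have hsel : Measurable fun q :
        (ℕ → ℕ → ℝ) × ((ℕ → ℕ → ℝ) × ((ℕ → ℝ) × ((ℕ → ℕ → ℕ → ℝ) × (ℕ → ℕ → ℝ)))) =>
        ((fun k => if k = m + 1 then q.2.1 else q.2.2.2.1 k),
         (fun k => if k = m + 1 then q.2.2.1 else q.2.2.2.2 k)) := by
      refine Measurable.prod ?_ ?_
      · refine measurable_pi_lambda _ fun k => ?_
        by_cases hk : k = m + 1
        · simp only [if_pos hk]; exact measurable_fst.comp measurable_snd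
        · simp only [if_neg hk]
          exact (measurable_pi_apply k).comp
            (measurable_fst.comp (measurable_snd.comp (measurable_snd.comp measurable_snd)))
      · refine measurable_pi_lambda _ fun k => ?_
        by_cases hk : k = m + 1
        · simp only [if_pos hk]; exact measurable_fst.comp (measurable_snd.comp measurable_snd)
        · simp only [if_neg hk]
          exact (measurable_pi_apply k).comp
            (measurable_snd.comp (measurable_snd.comp (measurable_snd.comp measurable_snd)))
    have h2 : Measurable fun q :
        (ℕ → ℕ → ℝ) × ((ℕ → ℕ → ℝ) × ((ℕ → ℝ) × ((ℕ → ℕ → ℕ → ℝ) × (ℕ → ℕ → ℝ)))) =>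
        φ (netH emb φ Nn (fun k => if k = m + 1 then q.2.1 else q.2.2.2.1 k)
            (fun k => if k = m + 1 then q.2.2.1 else q.2.2.2.2 k) (m + 1) j (inp p)) :=
      hφ.comp ((measurable_netH emb hφ Nn (m + 1) j (inp p)).comp hsel)
    exact ((h1.const_mul _).const_mul (α p)).mul h2
  -- deterministic recursion identification
  have keygen : ∀ (Wf : ℕ → ℕ → ℕ → ℝ) (bf : ℕ → ℕ → ℝ) (ω : Ω) (K : ℕ),
      (∀ k, 1 ≤ k → k ≤ K → Wf k = fun i j => W n k i j ω) →
      (∀ k, 1 ≤ k → k ≤ K → bf k = fun i => b k i ω) →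
      ∀ k, 1 ≤ k → k ≤ K → ∀ i x, netH emb φ Nn Wf bf k i x = h n k i x ω := by
    intro Wf bf ω K hW hb k
    induction k using Nat.strong_induction_on with
    | _ k ih =>
      rcases k with _ | _ | k
      · intro h1; exact absurd h1 (by omega)
      · intro _ hK i x
        rw [hrec1 n i x ω]
        simp [netH, hW 1 le_rfl hK, hb 1 le_rfl hK, hNn]
      · intro h1 hK i x
        rw [hrec n (k + 1) (by omega) i x ω]
        show netH emb φ Nn Wf bf (k + 2) i x = _
        simp only [netH]
        rw [hW (k + 2) (by omega) hK, hb (k + 2) (by omega) hK]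
        simp only [hNn]
        congr 1
        refine Finset.sum_congr rfl fun jj _ => ?_
        rw [ih (k + 1) (by omega) (by omega) (by omega) jj x]
  have keyun : ∀ (ω : Ω) (j : ℕ) (x : 𝒳),
      netH emb φ Nn (fun k => if k = m + 1 then X2 ω else (R ω).1 k)
        (fun k => if k = m + 1 then X3 ω else (R ω).2 k) (m + 1) j x
        = h n (m + 1) j x ω := by
    intro ω j x
    refine keygen _ _ ω (m + 1) ?_ ?_ (m + 1) (by omega) le_rfl j x
    · intro k hk1 hk2
      by_cases hk : k = m + 1
      · subst hk; simp [hX2]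
      · have hklt : k < m + 1 := by omega
        simp [hk, hR, hklt, show k ≤ m by omega]
    · intro k hk1 hk2
      by_cases hk : k = m + 1
      · subst hk; simp [hX3]
      · have hklt : k < m + 1 := by omega
        simp [hk, hR, hklt, show k ≤ m by omega]
  have keyperm : ∀ (ω : Ω) (j : ℕ) (x : 𝒳),
      netH emb φ Nn (fun k => if k = m + 1 then X2' ω else (R ω).1 k)
        (fun k => if k = m + 1 then X3' ω else (R ω).2 k) (m + 1) j x
        = h n (m + 1) (σ j) x ω := by
    intro ω j x
    rcases m with _ | m'
    · rw [hrec1 n (σ j) x ω]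
      simp [netH, hX2', hX3', hNn, hR]
    · rw [hrec n (m' + 1) (by omega) (σ j) x ω]
      show netH emb φ Nn (fun k => if k = m' + 2 then X2' ω else (R ω).1 k)
        (fun k => if k = m' + 2 then X3' ω else (R ω).2 k) (m' + 2) j x = _
      have hin : ∀ jj, netH emb φ Nn (fun k => if k = m' + 2 then X2' ω else (R ω).1 k)
          (fun k => if k = m' + 2 then X3' ω else (R ω).2 k) (m' + 1) jj x
          = h n (m' + 1) jj x ω := by
        intro jj
        refine keygen _ _ ω (m' + 1) ?_ ?_ (m' + 1) (by omega) le_rfl jj x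
        · intro k hk1 hk2
          have hk : k ≠ m' + 2 := by omega
          have hklt : k < m' + 2 := by omega
          simp [hk, hR, hklt, hk2]
        · intro k hk1 hk2
          have hk : k ≠ m' + 2 := by omega
          have hklt : k < m' + 2 := by omega
          simp [hk, hR, hklt, hk2]
      simp only [netH]
      simp only [if_pos rfl, if_true, eq_self_iff_true, hNn, hX2', hX3']
      congr 1
      refine Finset.sum_congr rfl fun jj _ => ?_
      rw [hin jj]
  -- conclude
  have eL : (fun ω => fun j : ℕ =>
        σW * ∑ p, α p * (σW⁻¹ * Real.sqrt (N (m + 1) n) * W n (m + 2) (idx p) (σ j) ω) *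
          φ (h n (m + 1) (σ j) (inp p) ω))
      = fun ω => G (X1' ω, (X2' ω, (X3' ω, R ω))) := by
    funext ω j
    simp only [hG]
    congr 1
    refine Finset.sum_congr rfl fun p _ => ?_
    rw [keyperm ω j (inp p)]
  have eR : (fun ω => fun j : ℕ =>
        σW * ∑ p, α p * (σW⁻¹ * Real.sqrt (N (m + 1) n) * W n (m + 2) (idx p) j ω) *
          φ (h n (m + 1) j (inp p) ω))
      = fun ω => G (X1 ω, (X2 ω, (X3 ω, R ω))) := by
    funext ω j
    simp only [hG]
    congr 1
    refine Finset.sum_congr rfl fun p _ => ?_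
    rw [keyun ω j (inp p)]
  rw [eL, eR]
  exact hID.comp hGm
end
end

section
/- Let A = A[n] ∈ ℝ^{n×n} be Haar-distributed on the orthogonal group O(n). Then for any fixed row indices i_a, i_b, i_c, i_d and any two distinct column indices j ≠ j', the rescaled fourth-order cross-moment satisfies lim_{n→∞} n² E[A_{i_a,j} A_{i_b,j} A_{i_c,j'} A_{i_d,j'}] = δ_{i_a,i_b} δ_{i_c,i_d}; that is, Haar orthogonal matrices satisfy condition (iv) of the Pseudo-iid definition with σ² = 1. -/
open MeasureTheory ProbabilityTheory Filter Finset Topology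

noncomputable section

/-- Matrices over a measurable space carry the product measurable structure. -/
instance matrixMeasurableSpace {m n α : Type*} [MeasurableSpace α] :
    MeasurableSpace (Matrix m n α) :=
  inferInstanceAs (MeasurableSpace (m → n → α))

open Matrix

namespace HaarAux

variable {n : ℕ}

lemma transpose_stdBasisMatrix (a b : Fin n) (c : ℝ) :
    (Matrix.single a b c)ᵀ = Matrix.single b a c := by
  ext i j
  simp [Matrix.single, Matrix.transpose_apply, and_comm]

/-- Rotation in the (p,q) plane. -/
def rotM (p q : Fin n) (c s : ℝ) : Matrix (Fin n) (Fin n) ℝ :=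
  1 + Matrix.single p p (c-1) + Matrix.single q q (c-1)
    + Matrix.single p q (-s) + Matrix.single q p s

lemma rotM_mem (p q : Fin n) (hpq : p ≠ q) (c s : ℝ) (h : c^2 + s^2 = 1) :
    rotM p q c s ∈ Matrix.orthogonalGroup (Fin n) ℝ := by
  rw [Matrix.mem_orthogonalGroup_iff']
  show star (rotM p q c s) * rotM p q c s = 1
  rw [Matrix.star_eq_conjTranspose, Matrix.conjTranspose_eq_transpose_of_trivial]
  unfold rotM
  simp only [Matrix.transpose_add, Matrix.transpose_one, transpose_stdBasisMatrix]
  have h1 : ∀ (x y : Fin n) (c' d : ℝ),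
      Matrix.single x p c' * Matrix.single q y d = 0 :=
    fun x y c' d => Matrix.single_mul_single_of_ne c' x p q hpq d
  have h2 : ∀ (x y : Fin n) (c' d : ℝ),
      Matrix.single x q c' * Matrix.single p y d = 0 :=
    fun x y c' d => Matrix.single_mul_single_of_ne c' x q p hpq.symm d
  simp only [Matrix.add_mul, Matrix.mul_add, Matrix.one_mul, Matrix.mul_one,
    Matrix.single_mul_single_same, h1, h2, add_zero, zero_add]
  ext a b
  simp only [Matrix.add_apply, Matrix.one_apply, Matrix.single, Matrix.of_apply]
  by_cases hap : a = p <;> by_cases haq : a = q <;> by_cases hbp : b = p <;> by_cases hbq : b = q <;>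
    simp_all [Ne.symm hpq, eq_comm] <;> nlinarith [h]

lemma rotM_mul_apply (p q : Fin n) (hpq : p ≠ q) (c s : ℝ) (M : Matrix (Fin n) (Fin n) ℝ)
    (i k : Fin n) :
    (rotM p q c s * M) i k =
      if i = p then c * M p k - s * M q k
      else if i = q then s * M p k + c * M q k
      else M i k := by
  unfold rotM
  simp only [Matrix.add_mul, Matrix.one_mul, Matrix.add_apply]
  by_cases hip : i = p <;> by_cases hiq : i = q
  · exact absurd (hip.symm.trans hiq) hpq
  all_goals subst_vars <;>
    simp_all [Matrix.single_mul_apply_same, Matrix.single_mul_apply_of_ne,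
      hpq, hpq.symm] <;> ring


variable {Ω : Type*} [MeasureSpace Ω] [IsProbabilityMeasure (volume : Measure Ω)]

lemma meas_entry {X : Ω → Matrix (Fin n) (Fin n) ℝ} (hX : Measurable X) (i k : Fin n) :
    Measurable fun ω => X ω i k :=
  (measurable_pi_apply k).comp ((measurable_pi_apply i).comp hX)

lemma entry_abs_le_one {M : Matrix (Fin n) (Fin n) ℝ}
    (hM : M ∈ Matrix.orthogonalGroup (Fin n) ℝ) (i k : Fin n) : |M i k| ≤ 1 := by
  rw [Matrix.mem_orthogonalGroup_iff'] at hM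
  have h1 : (star M * M) k k = 1 := by rw [show star M * M = 1 from hM, Matrix.one_apply_eq]
  rw [Matrix.mul_apply] at h1
  have h2 : ∀ l, (star M) k l * M l k = (M l k)^2 := by
    intro l
    have : (star M) k l = M l k := rfl
    rw [this]; ring
  simp only [h2] at h1
  have h3 : (M i k)^2 ≤ 1 := by
    rw [← h1]
    exact Finset.single_le_sum (f := fun l => (M l k)^2) (fun l _ => sq_nonneg _) (Finset.mem_univ i)
  nlinarith [abs_nonneg (M i k), sq_abs (M i k)]

lemma integrable_prod4 {X : Ω → Matrix (Fin n) (Fin n) ℝ} (hX : Measurable X)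
    (horth : ∀ᵐ ω, X ω ∈ Matrix.orthogonalGroup (Fin n) ℝ)
    (i1 i2 i3 i4 c1 c2 c3 c4 : Fin n) :
    Integrable (fun ω => X ω i1 c1 * X ω i2 c2 * X ω i3 c3 * X ω i4 c4) := by
  apply (integrable_const (1:ℝ)).mono'
  · exact ((((meas_entry hX i1 c1).mul (meas_entry hX i2 c2)).mul
      (meas_entry hX i3 c3)).mul (meas_entry hX i4 c4)).aestronglyMeasurable
  · filter_upwards [horth] with ω hω
    have b1 := entry_abs_le_one hω i1 c1
    have b2 := entry_abs_le_one hω i2 c2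
    have b3 := entry_abs_le_one hω i3 c3
    have b4 := entry_abs_le_one hω i4 c4
    have : |X ω i1 c1 * X ω i2 c2 * X ω i3 c3 * X ω i4 c4| ≤ 1 := by
      rw [abs_mul, abs_mul, abs_mul]
      have h12 : |X ω i1 c1| * |X ω i2 c2| ≤ 1 :=
        mul_le_one₀ b1 (abs_nonneg _) b2
      have h123 : |X ω i1 c1| * |X ω i2 c2| * |X ω i3 c3| ≤ 1 :=
        mul_le_one₀ h12 (abs_nonneg _) b3
      exact mul_le_one₀ h123 (abs_nonneg _) b4
    simpa only [Real.norm_eq_abs] using this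

lemma integral_quad_inv {X : Ω → Matrix (Fin n) (Fin n) ℝ}
    (hinvn : ∀ Q ∈ Matrix.orthogonalGroup (Fin n) ℝ,
      IdentDistrib (fun ω => Q * X ω) X volume volume)
    {Q : Matrix (Fin n) (Fin n) ℝ} (hQ : Q ∈ Matrix.orthogonalGroup (Fin n) ℝ)
    (i1 i2 i3 i4 c1 c2 c3 c4 : Fin n) :
    ∫ ω, (Q * X ω) i1 c1 * (Q * X ω) i2 c2 * (Q * X ω) i3 c3 * (Q * X ω) i4 c4
      = ∫ ω, X ω i1 c1 * X ω i2 c2 * X ω i3 c3 * X ω i4 c4 := by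
  have e : ∀ (i c : Fin n), Measurable fun M : Matrix (Fin n) (Fin n) ℝ => M i c :=
    fun i c => (measurable_pi_apply c).comp (measurable_pi_apply i)
  have hφ : Measurable (fun M : Matrix (Fin n) (Fin n) ℝ =>
      M i1 c1 * M i2 c2 * M i3 c3 * M i4 c4) :=
    (((e i1 c1).mul (e i2 c2)).mul (e i3 c3)).mul (e i4 c4)
  exact ((hinvn Q hQ).comp hφ).integral_eq

/-- The fourth cross-moment. -/
def M4 (X : Ω → Matrix (Fin n) (Fin n) ℝ) (j j' i1 i2 i3 i4 : Fin n) : ℝ :=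
  ∫ ω, X ω i1 j * X ω i2 j * X ω i3 j' * X ω i4 j'

def esgn (r i : Fin n) : ℝ := if i = r then -1 else 1

lemma esgn_sq (r i : Fin n) : esgn r i * esgn r i = 1 := by
  unfold esgn; by_cases h : i = r <;> simp [h]

lemma diag_sign_mem (r : Fin n) :
    Matrix.diagonal (esgn r) ∈ Matrix.orthogonalGroup (Fin n) ℝ := by
  rw [Matrix.mem_orthogonalGroup_iff']
  show star (Matrix.diagonal (esgn r)) * Matrix.diagonal (esgn r) = 1
  rw [Matrix.star_eq_conjTranspose, Matrix.diagonal_conjTranspose,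
    Matrix.diagonal_mul_diagonal]
  have h1 : (fun i => star (esgn r) i * esgn r i) = fun _ => (1:ℝ) := by
    funext i
    have h2 : star (esgn r) i = esgn r i := rfl
    rw [h2, esgn_sq]
  rw [h1]
  simp [Matrix.diagonal_one]

section Core

variable {X : Ω → Matrix (Fin n) (Fin n) ℝ}
  (hinvn : ∀ Q ∈ Matrix.orthogonalGroup (Fin n) ℝ,
    IdentDistrib (fun ω => Q * X ω) X volume volume)
  {j j' : Fin n}

include hinvn

lemma sign_rel (r i1 i2 i3 i4 : Fin n) :
    M4 X j j' i1 i2 i3 i4 =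
      esgn r i1 * esgn r i2 * esgn r i3 * esgn r i4 * M4 X j j' i1 i2 i3 i4 := by
  have h := integral_quad_inv hinvn (diag_sign_mem r) i1 i2 i3 i4 j j j' j'
  have h2 : (fun ω => (Matrix.diagonal (esgn r) * X ω) i1 j * (Matrix.diagonal (esgn r) * X ω) i2 j
      * (Matrix.diagonal (esgn r) * X ω) i3 j' * (Matrix.diagonal (esgn r) * X ω) i4 j')
      = fun ω => (esgn r i1 * esgn r i2 * esgn r i3 * esgn r i4) *
        (X ω i1 j * X ω i2 j * X ω i3 j' * X ω i4 j') := by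
    funext ω
    simp only [Matrix.diagonal_mul]
    ring
  rw [h2, integral_const_mul] at h
  unfold M4
  exact h.symm

lemma M4_zero_of_sign (r i1 i2 i3 i4 : Fin n)
    (h : esgn r i1 * esgn r i2 * esgn r i3 * esgn r i4 = -1) :
    M4 X j j' i1 i2 i3 i4 = 0 := by
  have := sign_rel hinvn (j := j) (j' := j') r i1 i2 i3 i4
  rw [h] at this
  linarith

lemma swap_rel (p q : Fin n) (hpq : p ≠ q) (i1 i2 i3 i4 : Fin n) :
    M4 X j j' i1 i2 i3 i4 =
      esgn p i1 * esgn p i2 * esgn p i3 * esgn p i4 *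
        M4 X j j' (Equiv.swap p q i1) (Equiv.swap p q i2)
          (Equiv.swap p q i3) (Equiv.swap p q i4) := by
  have hQapp : ∀ (M : Matrix (Fin n) (Fin n) ℝ) (i k : Fin n),
      (rotM p q 0 1 * M) i k = esgn p i * M (Equiv.swap p q i) k := by
    intro M i k
    rw [rotM_mul_apply p q hpq]
    unfold esgn
    by_cases hip : i = p
    · simp [hip, Equiv.swap_apply_left]
    · by_cases hiq : i = q
      · simp [hiq, hip, Equiv.swap_apply_right, Ne.symm hpq]
      · simp [hip, hiq, Equiv.swap_apply_of_ne_of_ne hip hiq]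
  have hmem := rotM_mem p q hpq 0 1 (by norm_num)
  have h := integral_quad_inv hinvn hmem i1 i2 i3 i4 j j j' j'
  have h2 : (fun ω => (rotM p q 0 1 * X ω) i1 j * (rotM p q 0 1 * X ω) i2 j
      * (rotM p q 0 1 * X ω) i3 j' * (rotM p q 0 1 * X ω) i4 j')
      = fun ω => (esgn p i1 * esgn p i2 * esgn p i3 * esgn p i4) *
        (X ω (Equiv.swap p q i1) j * X ω (Equiv.swap p q i2) j *
          X ω (Equiv.swap p q i3) j' * X ω (Equiv.swap p q i4) j') := by
    funext ω
    simp only [hQapp]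
    ring
  rw [h2, integral_const_mul] at h
  unfold M4
  exact h.symm

lemma swap_pair_D (p q : Fin n) (hpq : p ≠ q) (i k : Fin n) :
    M4 X j j' i i k k =
      M4 X j j' (Equiv.swap p q i) (Equiv.swap p q i)
        (Equiv.swap p q k) (Equiv.swap p q k) := by
  have h := swap_rel hinvn (j := j) (j' := j') p q hpq i i k k
  have he : esgn p i * esgn p i * esgn p k * esgn p k = 1 := by
    rw [mul_assoc, mul_comm (esgn p i), mul_assoc, esgn_sq, mul_one, esgn_sq]
  rw [he, one_mul] at h
  exact h

lemma swap_pair_C (p q : Fin n) (hpq : p ≠ q) (i k : Fin n) :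
    M4 X j j' i k i k =
      M4 X j j' (Equiv.swap p q i) (Equiv.swap p q k)
        (Equiv.swap p q i) (Equiv.swap p q k) := by
  have h := swap_rel hinvn (j := j) (j' := j') p q hpq i k i k
  have he : esgn p i * esgn p k * esgn p i * esgn p k = 1 := by
    have h1 := esgn_sq p i
    have h2 := esgn_sq p k
    nlinarith
  rw [he, one_mul] at h
  exact h

lemma M4_S_const (i k : Fin n) :
    M4 X j j' i i i i = M4 X j j' k k k k := by
  by_cases h : i = k
  · rw [h]
  · have := swap_pair_D hinvn (j := j) (j' := j') i k h i i
    simpa [Equiv.swap_apply_left] using this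

lemma M4_D_flip (i k : Fin n) (h : i ≠ k) :
    M4 X j j' i i k k = M4 X j j' k k i i := by
  have := swap_pair_D hinvn (j := j) (j' := j') i k h i k
  simpa [Equiv.swap_apply_left, Equiv.swap_apply_right] using this

lemma M4_D_stepL (i i' k : Fin n) (hik : i ≠ k) (hi'k : i' ≠ k) :
    M4 X j j' i i k k = M4 X j j' i' i' k k := by
  by_cases h : i = i'
  · rw [h]
  · have := swap_pair_D hinvn (j := j) (j' := j') i i' h i k
    simpa [Equiv.swap_apply_left, Equiv.swap_apply_of_ne_of_ne (Ne.symm hik) (Ne.symm hi'k)]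
      using this

lemma M4_D_stepR (i k k' : Fin n) (hik : i ≠ k) (hik' : i ≠ k') :
    M4 X j j' i i k k = M4 X j j' i i k' k' := by
  by_cases h : k = k'
  · rw [h]
  · have := swap_pair_D hinvn (j := j) (j' := j') k k' h i k
    simpa [Equiv.swap_apply_left, Equiv.swap_apply_of_ne_of_ne hik hik'] using this

lemma M4_D_const (i k i' k' : Fin n) (hik : i ≠ k) (hi'k' : i' ≠ k') :
    M4 X j j' i i k k = M4 X j j' i' i' k' k' := by
  by_cases h1 : i' = k
  · by_cases h2 : k' = i
    · rw [h1, h2]; exact M4_D_flip hinvn i k hik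
    · rw [M4_D_stepR hinvn i k k' hik (fun h => h2 (h.symm))]
      exact M4_D_stepL hinvn i i' k' (fun h => h2 (h.symm)) hi'k'
  · rw [M4_D_stepL hinvn i i' k hik h1]
    exact M4_D_stepR hinvn i' k k' h1 hi'k'

lemma M4_C_flip (i k : Fin n) (h : i ≠ k) :
    M4 X j j' i k i k = M4 X j j' k i k i := by
  have := swap_pair_C hinvn (j := j) (j' := j') i k h i k
  simpa [Equiv.swap_apply_left, Equiv.swap_apply_right] using this

lemma M4_C_stepL (i i' k : Fin n) (hik : i ≠ k) (hi'k : i' ≠ k) :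
    M4 X j j' i k i k = M4 X j j' i' k i' k := by
  by_cases h : i = i'
  · rw [h]
  · have := swap_pair_C hinvn (j := j) (j' := j') i i' h i k
    simpa [Equiv.swap_apply_left, Equiv.swap_apply_of_ne_of_ne (Ne.symm hik) (Ne.symm hi'k)]
      using this

lemma M4_C_stepR (i k k' : Fin n) (hik : i ≠ k) (hik' : i ≠ k') :
    M4 X j j' i k i k = M4 X j j' i k' i k' := by
  by_cases h : k = k'
  · rw [h]
  · have := swap_pair_C hinvn (j := j) (j' := j') k k' h i k
    simpa [Equiv.swap_apply_left, Equiv.swap_apply_of_ne_of_ne hik hik'] using this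

lemma M4_C_const (i k i' k' : Fin n) (hik : i ≠ k) (hi'k' : i' ≠ k') :
    M4 X j j' i k i k = M4 X j j' i' k' i' k' := by
  by_cases h1 : i' = k
  · by_cases h2 : k' = i
    · rw [h1, h2]; exact M4_C_flip hinvn i k hik
    · rw [M4_C_stepR hinvn i k k' hik (fun h => h2 (h.symm))]
      exact M4_C_stepL hinvn i i' k' (fun h => h2 (h.symm)) hi'k'
  · rw [M4_C_stepL hinvn i i' k hik h1]
    exact M4_C_stepR hinvn i' k k' h1 hi'k'

end Core

lemma col_prod_sum {M : Matrix (Fin n) (Fin n) ℝ}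
    (hM : M ∈ Matrix.orthogonalGroup (Fin n) ℝ) (u v : Fin n) :
    ∑ l, M l u * M l v = if u = v then 1 else 0 := by
  rw [Matrix.mem_orthogonalGroup_iff'] at hM
  have h1 : (star M * M) u v = (1 : Matrix (Fin n) (Fin n) ℝ) u v := by rw [show star M * M = 1 from hM]
  rw [Matrix.mul_apply] at h1
  have h2 : ∀ l, (star M) u l * M l v = M l u * M l v := fun l => rfl
  simp only [h2] at h1
  rw [h1, Matrix.one_apply]

lemma M4_comm34 {X : Ω → Matrix (Fin n) (Fin n) ℝ} (j j' i1 i2 i3 i4 : Fin n) :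
    M4 X j j' i1 i2 i3 i4 = M4 X j j' i1 i2 i4 i3 := by
  unfold M4
  congr 1
  funext ω
  ring

section CoreEq

variable {X : Ω → Matrix (Fin n) (Fin n) ℝ}
  (hX : Measurable X)
  (horth : ∀ᵐ ω, X ω ∈ Matrix.orthogonalGroup (Fin n) ℝ)
  {j j' : Fin n} (hjj : j ≠ j')

include hX horth

lemma sumA : ∑ i : Fin n, ∑ k : Fin n, M4 X j j' k k i i = 1 := by
  have hint : ∀ i k : Fin n, Integrable (fun ω => X ω k j * X ω k j * X ω i j' * X ω i j') :=
    fun i k => integrable_prod4 hX horth k k i i j j j' j'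
  have step1 : ∀ i : Fin n, ∑ k, M4 X j j' k k i i
      = ∫ ω, ∑ k, X ω k j * X ω k j * X ω i j' * X ω i j' := by
    intro i
    rw [integral_finset_sum _ (fun k _ => hint i k)]
    rfl
  have step2 : ∑ i : Fin n, ∑ k, M4 X j j' k k i i
      = ∫ ω, ∑ i : Fin n, ∑ k, X ω k j * X ω k j * X ω i j' * X ω i j' := by
    simp only [step1]
    rw [integral_finset_sum _ (fun i _ => integrable_finset_sum _ (fun k _ => hint i k))]
  rw [step2]
  have hpoint : ∀ᵐ ω, (∑ i : Fin n, ∑ k, X ω k j * X ω k j * X ω i j' * X ω i j') = 1 := by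
    filter_upwards [horth] with ω hω
    have hc := col_prod_sum hω
    calc ∑ i : Fin n, ∑ k, X ω k j * X ω k j * X ω i j' * X ω i j'
        = ∑ i : Fin n, (∑ k, X ω k j * X ω k j) * (X ω i j' * X ω i j') := by
          refine Finset.sum_congr rfl fun i _ => ?_
          rw [Finset.sum_mul]
          exact Finset.sum_congr rfl fun k _ => by ring
      _ = ∑ i : Fin n, X ω i j' * X ω i j' := by
          refine Finset.sum_congr rfl fun i _ => ?_
          rw [hc j j]
          simp
      _ = 1 := by rw [hc j' j']; simp
  rw [integral_congr_ae hpoint]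
  simp

lemma sumB (k : Fin n) (hjj : j ≠ j') : ∑ i : Fin n, M4 X j j' i k i k = 0 := by
  have hint : ∀ i : Fin n, Integrable (fun ω => X ω i j * X ω k j * X ω i j' * X ω k j') :=
    fun i => integrable_prod4 hX horth i k i k j j j' j'
  have step1 : ∑ i : Fin n, M4 X j j' i k i k
      = ∫ ω, ∑ i : Fin n, X ω i j * X ω k j * X ω i j' * X ω k j' := by
    rw [integral_finset_sum _ (fun i _ => hint i)]
    rfl
  rw [step1]
  have hpoint : ∀ᵐ ω, (∑ i : Fin n, X ω i j * X ω k j * X ω i j' * X ω k j') = 0 := by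
    filter_upwards [horth] with ω hω
    have hc := col_prod_sum hω
    calc ∑ i : Fin n, X ω i j * X ω k j * X ω i j' * X ω k j'
        = (∑ i, X ω i j * X ω i j') * (X ω k j * X ω k j') := by
          rw [Finset.sum_mul]
          exact Finset.sum_congr rfl fun i _ => by ring
      _ = 0 := by rw [hc j j', if_neg hjj]; simp
  rw [integral_congr_ae hpoint]
  simp

end CoreEq

lemma integral_add9 {f1 f2 f3 f4 f5 f6 f7 f8 f9 : Ω → ℝ}
    (h1 : Integrable f1) (h2 : Integrable f2) (h3 : Integrable f3) (h4 : Integrable f4)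
    (h5 : Integrable f5) (h6 : Integrable f6) (h7 : Integrable f7) (h8 : Integrable f8)
    (h9 : Integrable f9) :
    ∫ ω, (f1 ω + f2 ω + f3 ω + f4 ω + f5 ω + f6 ω + f7 ω + f8 ω + f9 ω)
      = (∫ ω, f1 ω) + (∫ ω, f2 ω) + (∫ ω, f3 ω) + (∫ ω, f4 ω) + (∫ ω, f5 ω)
        + (∫ ω, f6 ω) + (∫ ω, f7 ω) + (∫ ω, f8 ω) + (∫ ω, f9 ω) := by
  have g2 : Integrable (fun ω => f1 ω + f2 ω) ℙ := h1.add h2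
  have g3 : Integrable (fun ω => f1 ω + f2 ω + f3 ω) ℙ := g2.add h3
  have g4 : Integrable (fun ω => f1 ω + f2 ω + f3 ω + f4 ω) ℙ := g3.add h4
  have g5 : Integrable (fun ω => f1 ω + f2 ω + f3 ω + f4 ω + f5 ω) ℙ := g4.add h5
  have g6 : Integrable (fun ω => f1 ω + f2 ω + f3 ω + f4 ω + f5 ω + f6 ω) ℙ := g5.add h6
  have g7 : Integrable (fun ω => f1 ω + f2 ω + f3 ω + f4 ω + f5 ω + f6 ω + f7 ω) ℙ := g6.add h7
  have g8 : Integrable (fun ω => f1 ω + f2 ω + f3 ω + f4 ω + f5 ω + f6 ω + f7 ω + f8 ω) ℙ :=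
    g7.add h8
  rw [integral_add g8 h9, integral_add g7 h8, integral_add g6 h7, integral_add g5 h6,
    integral_add g4 h5, integral_add g3 h4, integral_add g2 h3, integral_add h1 h2]

lemma M4_rot {X : Ω → Matrix (Fin n) (Fin n) ℝ}
    (hX : Measurable X)
    (horth : ∀ᵐ ω, X ω ∈ Matrix.orthogonalGroup (Fin n) ℝ)
    (hinvn : ∀ Q ∈ Matrix.orthogonalGroup (Fin n) ℝ,
      IdentDistrib (fun ω => Q * X ω) X volume volume)
    (j j' : Fin n) (p q : Fin n) (hpq : p ≠ q) :
    M4 X j j' p p p p =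
      (1/4) * M4 X j j' p p p p + (-(1/2)) * M4 X j j' p p p q + (1/4) * M4 X j j' p p q q
      + (-(1/2)) * M4 X j j' p q p p + 1 * M4 X j j' p q p q + (-(1/2)) * M4 X j j' p q q q
      + (1/4) * M4 X j j' q q p p + (-(1/2)) * M4 X j j' q q p q
      + (1/4) * M4 X j j' q q q q := by
  set c : ℝ := Real.sqrt 2 / 2 with hc
  have hc2 : c * c = 1/2 := by
    rw [hc, div_mul_div_comm, Real.mul_self_sqrt (by norm_num : (0:ℝ) ≤ 2)]
    norm_num
  have hmem := rotM_mem p q hpq c c (by nlinarith [hc2])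
  have h := integral_quad_inv hinvn hmem p p p p j j j' j'
  have happ : ∀ (ω : Ω) (u : Fin n), (rotM p q c c * X ω) p u = c * X ω p u - c * X ω q u := by
    intro ω u
    rw [rotM_mul_apply p q hpq]
    simp
  have h2 : (fun ω => (rotM p q c c * X ω) p j * (rotM p q c c * X ω) p j *
      (rotM p q c c * X ω) p j' * (rotM p q c c * X ω) p j') =
      fun ω => (1/4) * (X ω p j * X ω p j * X ω p j' * X ω p j')
        + (-(1/2)) * (X ω p j * X ω p j * X ω p j' * X ω q j')
        + (1/4) * (X ω p j * X ω p j * X ω q j' * X ω q j')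
        + (-(1/2)) * (X ω p j * X ω q j * X ω p j' * X ω p j')
        + 1 * (X ω p j * X ω q j * X ω p j' * X ω q j')
        + (-(1/2)) * (X ω p j * X ω q j * X ω q j' * X ω q j')
        + (1/4) * (X ω q j * X ω q j * X ω p j' * X ω p j')
        + (-(1/2)) * (X ω q j * X ω q j * X ω p j' * X ω q j')
        + (1/4) * (X ω q j * X ω q j * X ω q j' * X ω q j') := by
    funext ω
    simp only [happ]
    have key : (c * X ω p j - c * X ω q j) * (c * X ω p j - c * X ω q j) *
        (c * X ω p j' - c * X ω q j') * (c * X ω p j' - c * X ω q j')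
        = (c*c)*((c*c)*((X ω p j - X ω q j) * (X ω p j - X ω q j) *
          (X ω p j' - X ω q j') * (X ω p j' - X ω q j'))) := by ring
    rw [key, hc2]
    ring
  rw [h2] at h
  rw [integral_add9
    ((integrable_prod4 hX horth p p p p j j j' j').const_mul _)
    ((integrable_prod4 hX horth p p p q j j j' j').const_mul _)
    ((integrable_prod4 hX horth p p q q j j j' j').const_mul _)
    ((integrable_prod4 hX horth p q p p j j j' j').const_mul _)
    ((integrable_prod4 hX horth p q p q j j j' j').const_mul _)
    ((integrable_prod4 hX horth p q q q j j j' j').const_mul _)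
    ((integrable_prod4 hX horth q q p p j j j' j').const_mul _)
    ((integrable_prod4 hX horth q q p q j j j' j').const_mul _)
    ((integrable_prod4 hX horth q q q q j j j' j').const_mul _)] at h
  simp only [integral_const_mul] at h
  unfold M4
  exact h.symm

lemma two_le_of_ne {j j' : Fin n} (hjj : j ≠ j') : 2 ≤ n := by
  by_contra h
  push_neg at h
  apply hjj
  have h1 : j.val = 0 := by omega
  have h2 : j'.val = 0 := by omega
  exact Fin.ext (h1.trans h2.symm)

lemma M4_vals {X : Ω → Matrix (Fin n) (Fin n) ℝ}
    (hX : Measurable X)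
    (horth : ∀ᵐ ω, X ω ∈ Matrix.orthogonalGroup (Fin n) ℝ)
    (hinvn : ∀ Q ∈ Matrix.orthogonalGroup (Fin n) ℝ,
      IdentDistrib (fun ω => Q * X ω) X volume volume)
    {j j' : Fin n} (hjj : j ≠ j') :
    (∀ p, M4 X j j' p p p p = 1/((n:ℝ)*((n:ℝ)+2))) ∧
    (∀ p q, p ≠ q → M4 X j j' p p q q = ((n:ℝ)+1)/(((n:ℝ)-1)*(n:ℝ)*((n:ℝ)+2))) ∧
    (∀ p q, p ≠ q → M4 X j j' p q p q = -(1/(((n:ℝ)-1)*(n:ℝ)*((n:ℝ)+2)))) := by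
  have hn2 : 2 ≤ n := two_le_of_ne hjj
  have hnR : (2:ℝ) ≤ (n:ℝ) := by exact_mod_cast hn2
  set p : Fin n := ⟨0, by omega⟩ with hp
  set q : Fin n := ⟨1, by omega⟩ with hq
  have hpq : p ≠ q := by
    intro h
    have := congrArg Fin.val h
    simp [hp, hq] at this
  set S := M4 X j j' p p p p with hS
  set D := M4 X j j' p p q q with hD
  set C := M4 X j j' p q p q with hC
  -- Equation A
  have inner : ∀ i : Fin n, ∑ k, M4 X j j' k k i i = ((n:ℝ)-1)*D + S := by
    intro i
    have split := Finset.sum_erase_add Finset.univ (fun k => M4 X j j' k k i i)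
      (Finset.mem_univ i)
    rw [← split]
    have hterm : ∀ k ∈ Finset.univ.erase i, M4 X j j' k k i i = D := fun k hk =>
      M4_D_const hinvn k i p q (Finset.ne_of_mem_erase hk) hpq
    rw [Finset.sum_congr rfl hterm, Finset.sum_const,
      Finset.card_erase_of_mem (Finset.mem_univ i), Finset.card_univ, Fintype.card_fin]
    show (n-1) • D + M4 X j j' i i i i = _
    rw [M4_S_const hinvn i p, nsmul_eq_mul, Nat.cast_sub (by omega : 1 ≤ n), Nat.cast_one]
  have hA : (n:ℝ) * (((n:ℝ)-1)*D + S) = 1 := by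
    have hs := sumA hX horth (j := j) (j' := j')
    rw [Finset.sum_congr rfl (fun i _ => inner i), Finset.sum_const, Finset.card_univ,
      Fintype.card_fin, nsmul_eq_mul] at hs
    exact hs
  -- Equation B
  have hB : S + ((n:ℝ)-1)*C = 0 := by
    have hs := sumB hX horth p hjj
    have split := Finset.sum_erase_add Finset.univ (fun i => M4 X j j' i p i p)
      (Finset.mem_univ p)
    rw [← split] at hs
    have hterm : ∀ i ∈ Finset.univ.erase p, M4 X j j' i p i p = C := fun i hi =>
      M4_C_const hinvn i p p q (Finset.ne_of_mem_erase hi) hpq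
    rw [Finset.sum_congr rfl hterm, Finset.sum_const,
      Finset.card_erase_of_mem (Finset.mem_univ p), Finset.card_univ, Fintype.card_fin,
      nsmul_eq_mul, Nat.cast_sub (by omega : 1 ≤ n), Nat.cast_one] at hs
    linarith
  -- Rotation equation
  have hrot := M4_rot hX horth hinvn j j' p q hpq
  have z1 : M4 X j j' p p p q = 0 :=
    M4_zero_of_sign hinvn q p p p q (by unfold esgn; simp [hpq])
  have z2 : M4 X j j' p q p p = 0 :=
    M4_zero_of_sign hinvn q p q p p (by unfold esgn; simp [hpq])
  have z3 : M4 X j j' p q q q = 0 :=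
    M4_zero_of_sign hinvn p p q q q (by unfold esgn; simp [Ne.symm hpq])
  have z4 : M4 X j j' q q p q = 0 :=
    M4_zero_of_sign hinvn p q q p q (by unfold esgn; simp [Ne.symm hpq])
  rw [z1, z2, z3, z4, M4_D_const hinvn q p p q (Ne.symm hpq) hpq,
    M4_S_const hinvn q p] at hrot
  -- hrot : S = (1/4)*S + (-(1/2))*0 + (1/4)*D + (-(1/2))*0 + 1*C + (-(1/2))*0
  --   + (1/4)*D + (-(1/2))*0 + (1/4)*S
  have hn0 : (n:ℝ) ≠ 0 := by linarith
  have hn1 : (n:ℝ) - 1 ≠ 0 := by linarith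
  have hn2' : (n:ℝ) + 2 ≠ 0 := by linarith
  have keyS : (n:ℝ)*((n:ℝ)+2)*S = 1 := by
    linear_combination hA + (2*(n:ℝ)*((n:ℝ)-1)) * hrot + (2*(n:ℝ)) * hB
  have dne : ((n:ℝ)-1)*(n:ℝ)*((n:ℝ)+2) ≠ 0 := mul_ne_zero (mul_ne_zero hn1 hn0) hn2'
  have keyC : ((n:ℝ)-1)*(n:ℝ)*((n:ℝ)+2)*C = -1 := by
    linear_combination ((n:ℝ)*((n:ℝ)+2))*hB - keyS
  have keyD : ((n:ℝ)-1)*(n:ℝ)*((n:ℝ)+2)*D = (n:ℝ)+1 := by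
    linear_combination (-2*((n:ℝ)-1)*(n:ℝ)*((n:ℝ)+2))*hrot + ((n:ℝ)-1)*keyS + (-2)*keyC
  have hSval : S = 1/((n:ℝ)*((n:ℝ)+2)) := by
    rw [eq_div_iff (mul_ne_zero hn0 hn2')]
    linear_combination keyS
  have hCval : C = -(1/(((n:ℝ)-1)*(n:ℝ)*((n:ℝ)+2))) := by
    rw [show -(1/(((n:ℝ)-1)*(n:ℝ)*((n:ℝ)+2))) = (-1)/(((n:ℝ)-1)*(n:ℝ)*((n:ℝ)+2)) from
      (neg_div _ _).symm, eq_div_iff dne]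
    linear_combination keyC
  have hDval : D = ((n:ℝ)+1)/(((n:ℝ)-1)*(n:ℝ)*((n:ℝ)+2)) := by
    rw [eq_div_iff dne]
    linear_combination keyD
  refine ⟨fun r => ?_, fun r s hrs => ?_, fun r s hrs => ?_⟩
  · rw [M4_S_const hinvn r p]
    exact hSval
  · rw [M4_D_const hinvn r s p q hrs hpq]
    exact hDval
  · rw [M4_C_const hinvn r s p q hrs hpq]
    exact hCval

lemma tend_base : Tendsto (fun n : ℕ => 1/(n:ℝ)) atTop (𝓝 0) :=
  tendsto_one_div_atTop_nhds_zero_nat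

lemma tendS : Tendsto (fun n : ℕ => (n:ℝ)^2 * (1/((n:ℝ)*((n:ℝ)+2)))) atTop (𝓝 1) := by
  have h2 : Tendsto (fun n : ℕ => 2*(1/(n:ℝ))) atTop (𝓝 0) := by
    simpa using tend_base.const_mul 2
  have hden : Tendsto (fun n : ℕ => 1 + 2*(1/(n:ℝ))) atTop (𝓝 1) := by
    simpa using (tendsto_const_nhds (x := (1:ℝ))).add h2
  have hq : Tendsto (fun n : ℕ => (1 + 2*(1/(n:ℝ)))⁻¹) atTop (𝓝 1) := by
    simpa using hden.inv₀ one_ne_zero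
  refine hq.congr' ?_
  filter_upwards [eventually_ge_atTop 1] with n hn
  have hn0 : (n:ℝ) ≠ 0 := Nat.cast_ne_zero.mpr (by omega)
  have hn2 : (n:ℝ) + 2 ≠ 0 := by positivity
  field_simp

lemma tendD : Tendsto (fun n : ℕ =>
    (n:ℝ)^2 * (((n:ℝ)+1)/(((n:ℝ)-1)*(n:ℝ)*((n:ℝ)+2)))) atTop (𝓝 1) := by
  have h2 : Tendsto (fun n : ℕ => 2*(1/(n:ℝ))) atTop (𝓝 0) := by
    simpa using tend_base.const_mul 2
  have hnum : Tendsto (fun n : ℕ => 1 + 1/(n:ℝ)) atTop (𝓝 1) := by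
    simpa using (tendsto_const_nhds (x := (1:ℝ))).add tend_base
  have hden : Tendsto (fun n : ℕ => (1 - 1/(n:ℝ)) * (1 + 2*(1/(n:ℝ)))) atTop (𝓝 1) := by
    have := ((tendsto_const_nhds (x := (1:ℝ))).sub tend_base).mul
      ((tendsto_const_nhds (x := (1:ℝ))).add h2)
    simpa using this
  have hq : Tendsto (fun n : ℕ => (1 + 1/(n:ℝ)) * ((1 - 1/(n:ℝ)) * (1 + 2*(1/(n:ℝ))))⁻¹)
      atTop (𝓝 1) := by
    simpa using hnum.mul (hden.inv₀ one_ne_zero)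
  refine hq.congr' ?_
  filter_upwards [eventually_ge_atTop 2] with n hn
  have hn0 : (n:ℝ) ≠ 0 := Nat.cast_ne_zero.mpr (by omega)
  have hn1 : (n:ℝ) - 1 ≠ 0 := by
    have : (2:ℝ) ≤ (n:ℝ) := by exact_mod_cast hn
    linarith
  have hn2 : (n:ℝ) + 2 ≠ 0 := by positivity
  field_simp

lemma tendC : Tendsto (fun n : ℕ =>
    (n:ℝ)^2 * (-(1/(((n:ℝ)-1)*(n:ℝ)*((n:ℝ)+2))))) atTop (𝓝 0) := by
  have h2 : Tendsto (fun n : ℕ => 2*(1/(n:ℝ))) atTop (𝓝 0) := by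
    simpa using tend_base.const_mul 2
  have hden : Tendsto (fun n : ℕ => (1 - 1/(n:ℝ)) * (1 + 2*(1/(n:ℝ)))) atTop (𝓝 1) := by
    have := ((tendsto_const_nhds (x := (1:ℝ))).sub tend_base).mul
      ((tendsto_const_nhds (x := (1:ℝ))).add h2)
    simpa using this
  have hq : Tendsto (fun n : ℕ => -((1/(n:ℝ)) * ((1 - 1/(n:ℝ)) * (1 + 2*(1/(n:ℝ))))⁻¹))
      atTop (𝓝 0) := by
    have := (tend_base.mul (hden.inv₀ one_ne_zero)).neg
    simpa using this
  refine hq.congr' ?_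
  filter_upwards [eventually_ge_atTop 2] with n hn
  have hn0 : (n:ℝ) ≠ 0 := Nat.cast_ne_zero.mpr (by omega)
  have hn1 : (n:ℝ) - 1 ≠ 0 := by
    have : (2:ℝ) ≤ (n:ℝ) := by exact_mod_cast hn
    linarith
  have hn2 : (n:ℝ) + 2 ≠ 0 := by positivity
  field_simp

end HaarAux

open HaarAux

/-- Haar orthogonal matrices satisfy condition (iv) of the Pseudo-iid definition with
`σ² = 1`: for fixed row indices and distinct column indices `j ≠ j'`, the rescaled
fourth cross-moment `n² E[A_{i_a j} A_{i_b j} A_{i_c j'} A_{i_d j'}]` converges to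
`δ_{i_a i_b} δ_{i_c i_d}` as `n → ∞`. -/
theorem haar_orthogonal_fourth_moment_limit
    {Ω : Type*} [MeasureSpace Ω] [IsProbabilityMeasure (volume : Measure Ω)]
    (A : ∀ n : ℕ, Ω → Matrix (Fin n) (Fin n) ℝ)
    (hmeas : ∀ n, Measurable (A n))
    (horth : ∀ n, ∀ᵐ ω, A n ω ∈ Matrix.orthogonalGroup (Fin n) ℝ)
    (hinv : ∀ n, ∀ Q ∈ Matrix.orthogonalGroup (Fin n) ℝ,
      IdentDistrib (fun ω => Q * A n ω) (A n) volume volume)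
    (ia ib ic id' j j' : ℕ) (hjj : j ≠ j') :
    Tendsto (fun n =>
      if h : ia < n ∧ ib < n ∧ ic < n ∧ id' < n ∧ j < n ∧ j' < n then
        (n : ℝ) ^ 2 * ∫ ω, A n ω ⟨ia, h.1⟩ ⟨j, h.2.2.2.2.1⟩ *
          A n ω ⟨ib, h.2.1⟩ ⟨j, h.2.2.2.2.1⟩ *
          A n ω ⟨ic, h.2.2.1⟩ ⟨j', h.2.2.2.2.2⟩ *
          A n ω ⟨id', h.2.2.2.1⟩ ⟨j', h.2.2.2.2.2⟩
      else 0) atTop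
      (𝓝 ((if ia = ib then (1 : ℝ) else 0) * (if ic = id' then (1 : ℝ) else 0))) := by
  classical
  by_cases hab : ia = ib
  · by_cases hcd : ic = id'
    · subst hab; subst hcd
      rw [if_pos rfl, if_pos rfl, one_mul]
      by_cases hac : ia = ic
      · subst hac
        refine tendS.congr' ?_
        filter_upwards [eventually_ge_atTop (ia+j+j'+2)] with n hn
        have hcond : ia < n ∧ ia < n ∧ ia < n ∧ ia < n ∧ j < n ∧ j' < n := by omega
        rw [dif_pos hcond]
        have hjf : (⟨j, hcond.2.2.2.2.1⟩ : Fin n) ≠ ⟨j', hcond.2.2.2.2.2⟩ :=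
          fun h => hjj (by simpa using congrArg Fin.val h)
        obtain ⟨hSv, _, _⟩ := M4_vals (hmeas n) (horth n) (hinv n) hjf
        exact congrArg (fun z => (n:ℝ)^2 * z) (hSv ⟨ia, hcond.1⟩).symm
      · refine tendD.congr' ?_
        filter_upwards [eventually_ge_atTop (ia+ic+j+j'+2)] with n hn
        have hcond : ia < n ∧ ia < n ∧ ic < n ∧ ic < n ∧ j < n ∧ j' < n := by omega
        rw [dif_pos hcond]
        have hjf : (⟨j, hcond.2.2.2.2.1⟩ : Fin n) ≠ ⟨j', hcond.2.2.2.2.2⟩ :=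
          fun h => hjj (by simpa using congrArg Fin.val h)
        obtain ⟨_, hDv, _⟩ := M4_vals (hmeas n) (horth n) (hinv n) hjf
        have hne : (⟨ia, hcond.1⟩ : Fin n) ≠ ⟨ic, hcond.2.2.1⟩ :=
          fun h => hac (by simpa using congrArg Fin.val h)
        exact congrArg (fun z => (n:ℝ)^2 * z)
          (hDv ⟨ia, hcond.1⟩ ⟨ic, hcond.2.2.1⟩ hne).symm
    · -- ia = ib, ic ≠ id' : limit 0
      subst hab
      rw [if_pos rfl, if_neg hcd, mul_zero]
      refine tendsto_const_nhds.congr' ?_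
      filter_upwards [eventually_ge_atTop (ia+ic+id'+j+j'+2)] with n hn
      have hcond : ia < n ∧ ia < n ∧ ic < n ∧ id' < n ∧ j < n ∧ j' < n := by omega
      rw [dif_pos hcond]
      symm
      rw [mul_eq_zero]
      right
      refine M4_zero_of_sign (hinv n) ⟨ic, hcond.2.2.1⟩ ⟨ia, hcond.1⟩ ⟨ia, hcond.1⟩
        ⟨ic, hcond.2.2.1⟩ ⟨id', hcond.2.2.2.1⟩ ?_
      unfold esgn
      rw [if_pos rfl, if_neg (show (⟨id', hcond.2.2.2.1⟩ : Fin n) ≠ ⟨ic, hcond.2.2.1⟩ from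
        fun h => hcd (by simpa using (congrArg Fin.val h).symm))]
      by_cases h : (⟨ia, hcond.1⟩ : Fin n) = ⟨ic, hcond.2.2.1⟩ <;> simp [h]
  · by_cases hcd : ic = id'
    · -- ia ≠ ib, ic = id' : limit 0
      subst hcd
      rw [if_neg hab, zero_mul]
      refine tendsto_const_nhds.congr' ?_
      filter_upwards [eventually_ge_atTop (ia+ib+ic+j+j'+2)] with n hn
      have hcond : ia < n ∧ ib < n ∧ ic < n ∧ ic < n ∧ j < n ∧ j' < n := by omega
      rw [dif_pos hcond]
      symm
      rw [mul_eq_zero]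
      right
      refine M4_zero_of_sign (hinv n) ⟨ia, hcond.1⟩ ⟨ia, hcond.1⟩ ⟨ib, hcond.2.1⟩
        ⟨ic, hcond.2.2.1⟩ ⟨ic, hcond.2.2.1⟩ ?_
      unfold esgn
      rw [if_pos rfl, if_neg (show (⟨ib, hcond.2.1⟩ : Fin n) ≠ ⟨ia, hcond.1⟩ from
        fun h => hab (by simpa using (congrArg Fin.val h).symm))]
      by_cases h : (⟨ic, hcond.2.2.1⟩ : Fin n) = ⟨ia, hcond.1⟩ <;> simp [h]
    · -- ia ≠ ib, ic ≠ id'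
      rw [if_neg hab, zero_mul]
      by_cases h1 : ia = ic ∧ ib = id'
      · obtain ⟨h1a, h1b⟩ := h1
        subst h1a; subst h1b
        refine tendC.congr' ?_
        filter_upwards [eventually_ge_atTop (ia+ib+j+j'+2)] with n hn
        have hcond : ia < n ∧ ib < n ∧ ia < n ∧ ib < n ∧ j < n ∧ j' < n := by omega
        rw [dif_pos hcond]
        have hjf : (⟨j, hcond.2.2.2.2.1⟩ : Fin n) ≠ ⟨j', hcond.2.2.2.2.2⟩ :=
          fun h => hjj (by simpa using congrArg Fin.val h)
        obtain ⟨_, _, hCv⟩ := M4_vals (hmeas n) (horth n) (hinv n) hjf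
        have hne : (⟨ia, hcond.1⟩ : Fin n) ≠ ⟨ib, hcond.2.1⟩ :=
          fun h => hab (by simpa using congrArg Fin.val h)
        exact congrArg (fun z => (n:ℝ)^2 * z)
          (hCv ⟨ia, hcond.1⟩ ⟨ib, hcond.2.1⟩ hne).symm
      · by_cases h2 : ia = id' ∧ ib = ic
        · obtain ⟨h2a, h2b⟩ := h2
          subst h2a; subst h2b
          refine tendC.congr' ?_
          filter_upwards [eventually_ge_atTop (ia+ib+j+j'+2)] with n hn
          have hcond : ia < n ∧ ib < n ∧ ib < n ∧ ia < n ∧ j < n ∧ j' < n := by omega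
          rw [dif_pos hcond]
          have hjf : (⟨j, hcond.2.2.2.2.1⟩ : Fin n) ≠ ⟨j', hcond.2.2.2.2.2⟩ :=
            fun h => hjj (by simpa using congrArg Fin.val h)
          obtain ⟨_, _, hCv⟩ := M4_vals (hmeas n) (horth n) (hinv n) hjf
          have hne : (⟨ia, hcond.1⟩ : Fin n) ≠ ⟨ib, hcond.2.1⟩ :=
            fun h => hab (by simpa using congrArg Fin.val h)
          exact congrArg (fun z => (n:ℝ)^2 * z)
            ((M4_comm34 (X := A n) ⟨j, hcond.2.2.2.2.1⟩ ⟨j', hcond.2.2.2.2.2⟩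
              ⟨ia, hcond.1⟩ ⟨ib, hcond.2.1⟩ ⟨ib, hcond.2.1⟩ ⟨ia, hcond.1⟩).trans
              (hCv ⟨ia, hcond.1⟩ ⟨ib, hcond.2.1⟩ hne)).symm
        · -- no pairing: value 0
          refine tendsto_const_nhds.congr' ?_
          filter_upwards [eventually_ge_atTop (ia+ib+ic+id'+j+j'+2)] with n hn
          have hcond : ia < n ∧ ib < n ∧ ic < n ∧ id' < n ∧ j < n ∧ j' < n := by omega
          rw [dif_pos hcond]
          symm
          rw [mul_eq_zero]
          right
          by_cases hic : ia = ic
          · -- then ib ≠ id' ; flip at ib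
            have hbd : ib ≠ id' := fun h => h1 ⟨hic, h⟩
            refine M4_zero_of_sign (hinv n) ⟨ib, hcond.2.1⟩ ⟨ia, hcond.1⟩ ⟨ib, hcond.2.1⟩
              ⟨ic, hcond.2.2.1⟩ ⟨id', hcond.2.2.2.1⟩ ?_
            unfold esgn
            rw [if_pos rfl,
              if_neg (show (⟨ia, hcond.1⟩ : Fin n) ≠ ⟨ib, hcond.2.1⟩ from
                fun h => hab (by simpa using congrArg Fin.val h)),
              if_neg (show (⟨ic, hcond.2.2.1⟩ : Fin n) ≠ ⟨ib, hcond.2.1⟩ from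
                fun h => hab (by simpa [← hic] using (congrArg Fin.val h))),
              if_neg (show (⟨id', hcond.2.2.2.1⟩ : Fin n) ≠ ⟨ib, hcond.2.1⟩ from
                fun h => hbd (by simpa using (congrArg Fin.val h).symm))]
            norm_num
          · by_cases hid : ia = id'
            · -- then ib ≠ ic ; flip at ib
              have hbc : ib ≠ ic := fun h => h2 ⟨hid, h⟩
              refine M4_zero_of_sign (hinv n) ⟨ib, hcond.2.1⟩ ⟨ia, hcond.1⟩ ⟨ib, hcond.2.1⟩
                ⟨ic, hcond.2.2.1⟩ ⟨id', hcond.2.2.2.1⟩ ?_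
              unfold esgn
              rw [if_pos rfl,
                if_neg (show (⟨ia, hcond.1⟩ : Fin n) ≠ ⟨ib, hcond.2.1⟩ from
                  fun h => hab (by simpa using congrArg Fin.val h)),
                if_neg (show (⟨ic, hcond.2.2.1⟩ : Fin n) ≠ ⟨ib, hcond.2.1⟩ from
                  fun h => hbc (by simpa using (congrArg Fin.val h).symm)),
                if_neg (show (⟨id', hcond.2.2.2.1⟩ : Fin n) ≠ ⟨ib, hcond.2.1⟩ from
                  fun h => hab (by simpa [← hid] using congrArg Fin.val h))]
              norm_num
            · -- ia distinct from ic and id' : flip at ia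
              refine M4_zero_of_sign (hinv n) ⟨ia, hcond.1⟩ ⟨ia, hcond.1⟩ ⟨ib, hcond.2.1⟩
                ⟨ic, hcond.2.2.1⟩ ⟨id', hcond.2.2.2.1⟩ ?_
              unfold esgn
              rw [if_pos rfl,
                if_neg (show (⟨ib, hcond.2.1⟩ : Fin n) ≠ ⟨ia, hcond.1⟩ from
                  fun h => hab (by simpa using (congrArg Fin.val h).symm)),
                if_neg (show (⟨ic, hcond.2.2.1⟩ : Fin n) ≠ ⟨ia, hcond.1⟩ from
                  fun h => hic (by simpa using (congrArg Fin.val h).symm)),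
                if_neg (show (⟨id', hcond.2.2.2.1⟩ : Fin n) ≠ ⟨ia, hcond.1⟩ from
                  fun h => hid (by simpa using (congrArg Fin.val h).symm))]
              norm_num
end
end

section
/- Let C = [C_1, …, C_r] ∈ ℝ^{m×r} be a uniformly drawn orthonormal basis of a random r-dimensional subspace of ℝ^m (i.e., C is distributed as the first r columns of a Haar orthogonal matrix), let P ∈ ℝ^{r×n} have iid entries independent of C, and set A = CP ∈ ℝ^{m×n}. Then: (1) A is row-exchangeable and column-exchangeable; and (2) if the entries of P are centered with s = E[P_{11}²] < ∞, then for any row indices i_a, i_b, i_c, i_d, E[A_{i_a,1} A_{i_b,1} A_{i_c,2} A_{i_d,2}] = s² Σ_{1 ≤ k, k' ≤ r} E[C_{i_a,k} C_{i_b,k} C_{i_c,k'} C_{i_d,k'}]. -/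
open MeasureTheory ProbabilityTheory Finset

noncomputable section

lemma aux_map_eq_pi {Ω : Type*} [MeasureSpace Ω] [IsProbabilityMeasure (volume : Measure Ω)]
    {ι : Type*} [Fintype ι] {X : Ω → ι → ℝ} (hX : Measurable X)
    (hindep : iIndepFun (fun i ω => X ω i) volume) :
    volume.map X = Measure.pi (fun i => volume.map (fun ω => X ω i)) := by
  have hXi : ∀ i, Measurable fun ω => X ω i := fun i => (measurable_pi_apply i).comp hX
  have : ∀ i, IsProbabilityMeasure (volume.map (fun ω => X ω i)) :=
    fun i => Measure.isProbabilityMeasure_map (hXi i).aemeasurable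
  refine (Measure.pi_eq (fun s hs => ?_)).symm
  rw [Measure.map_apply hX (MeasurableSet.univ_pi hs)]
  have key := hindep.measure_inter_preimage_eq_mul Finset.univ (fun i _ => hs i)
  have hset : X ⁻¹' (Set.pi Set.univ s) = ⋂ i ∈ Finset.univ, (fun ω => X ω i) ⁻¹' s i := by
    ext ω; simp [Set.mem_pi]
  rw [hset, key]
  exact Finset.prod_congr rfl fun i _ => (Measure.map_apply (hXi i) (hs i)).symm

lemma aux_col_perm {Ω : Type*} [MeasureSpace Ω] [IsProbabilityMeasure (volume : Measure Ω)]
    {r n : ℕ} {P : Ω → Matrix (Fin r) (Fin n) ℝ} (hPmeas : Measurable P)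
    (hPiid : iIndepFun
      (fun p : Fin r × Fin n => fun ω => P ω p.1 p.2) volume)
    (hPid : ∀ p q : Fin r × Fin n,
      IdentDistrib (fun ω => P ω p.1 p.2) (fun ω => P ω q.1 q.2) volume volume)
    (τ : Equiv.Perm (Fin n)) :
    IdentDistrib (fun ω => (P ω).submatrix id τ) P volume volume := by
  classical
  set X : Ω → (Fin r × Fin n → ℝ) := fun ω p => P ω p.1 p.2 with hXdef
  have hX : Measurable X := measurable_pi_lambda _ fun p => hPmeas.eval.eval
  set e : (Fin r × Fin n) ≃ (Fin r × Fin n) := (Equiv.refl (Fin r)).prodCongr τ with hedef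
  set ν : Fin r × Fin n → Measure ℝ := fun p => volume.map (fun ω => X ω p) with hνdef
  have hνprob : ∀ p, IsProbabilityMeasure (ν p) := fun p =>
    Measure.isProbabilityMeasure_map (((measurable_pi_apply p).comp hX).aemeasurable)
  have hmapX : volume.map X = Measure.pi ν := aux_map_eq_pi hX hPiid
  -- the reindexing map
  set g : (Fin r × Fin n → ℝ) → (Fin r × Fin n → ℝ) :=
    ⇑(MeasurableEquiv.piCongrLeft (fun _ : Fin r × Fin n => ℝ) e.symm) with hgdef
  have hg : Measurable g := (MeasurableEquiv.piCongrLeft (fun _ => ℝ) e.symm).measurable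
  have hgapp : ∀ (x : Fin r × Fin n → ℝ) (p : Fin r × Fin n), g x p = x (e p) := by
    intro x p
    have h := MeasurableEquiv.piCongrLeft_apply_apply (β := fun _ : Fin r × Fin n => ℝ)
      e.symm x (e p)
    simpa using h
  have hmp : MeasurePreserving g (Measure.pi ν) (Measure.pi (fun p => ν (e p))) := by
    have h := MeasureTheory.measurePreserving_piCongrLeft (μ := fun p => ν (e p)) e.symm
    have hsrc : (fun p => ν (e (e.symm p))) = ν := funext fun p => by
      rw [Equiv.apply_symm_apply]
    rw [hsrc] at h
    exact h
  have hνe : (fun p => ν (e p)) = ν := funext fun p => (hPid (e p) p).map_eq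
  -- law of the permuted coordinate family
  have hmapX' : volume.map (fun ω => g (X ω)) = volume.map X := by
    have hc : (fun ω => g (X ω)) = g ∘ X := rfl
    rw [hc, ← Measure.map_map hg hX, hmapX, hmp.map_eq, hνe]
  -- curry back to matrices
  set curry : (Fin r × Fin n → ℝ) → Matrix (Fin r) (Fin n) ℝ :=
    fun h => Matrix.of fun i j => h (i, j) with hcdef
  have hcurry : Measurable curry :=
    measurable_pi_lambda _ fun i => measurable_pi_lambda _ fun j => measurable_pi_apply _
  have hP : P = fun ω => curry (X ω) := rfl
  have hP' : (fun ω => (P ω).submatrix id τ) = fun ω => curry (g (X ω)) := by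
    funext ω
    ext i j
    simp [curry, Matrix.submatrix_apply, hgapp, X, e]
  rw [hP']
  refine ⟨((hcurry.comp hg).comp hX).aemeasurable, hPmeas.aemeasurable, ?_⟩
  rw [hP]
  have h1 : (fun ω => curry (g (X ω))) = curry ∘ (g ∘ X) := rfl
  have h2 : (fun ω => curry (X ω)) = curry ∘ X := rfl
  have h3 : (fun ω => g (X ω)) = g ∘ X := rfl
  rw [h1, h2, ← Measure.map_map hcurry (hg.comp hX), ← Measure.map_map hcurry hX, ← h3, hmapX']

lemma aux_pair_fst {Ω : Type*} [MeasureSpace Ω] [IsProbabilityMeasure (volume : Measure Ω)]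
    {β γ : Type*} [MeasurableSpace β] [MeasurableSpace γ]
    {X X' : Ω → β} {Y : Ω → γ} (hX : Measurable X) (hX' : Measurable X') (hY : Measurable Y)
    (hid : IdentDistrib X X' volume volume)
    (h1 : IndepFun X Y volume) (h2 : IndepFun X' Y volume) :
    IdentDistrib (fun ω => (X ω, Y ω)) (fun ω => (X' ω, Y ω)) volume volume := by
  refine ⟨(hX.prodMk hY).aemeasurable, (hX'.prodMk hY).aemeasurable, ?_⟩
  rw [(indepFun_iff_map_prod_eq_prod_map_map hX.aemeasurable hY.aemeasurable).mp h1,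
    (indepFun_iff_map_prod_eq_prod_map_map hX'.aemeasurable hY.aemeasurable).mp h2,
    hid.map_eq]

lemma aux_pair_snd {Ω : Type*} [MeasureSpace Ω] [IsProbabilityMeasure (volume : Measure Ω)]
    {β γ : Type*} [MeasurableSpace β] [MeasurableSpace γ]
    {X : Ω → β} {Y Y' : Ω → γ} (hX : Measurable X) (hY : Measurable Y) (hY' : Measurable Y')
    (hid : IdentDistrib Y Y' volume volume)
    (h1 : IndepFun X Y volume) (h2 : IndepFun X Y' volume) :
    IdentDistrib (fun ω => (X ω, Y ω)) (fun ω => (X ω, Y' ω)) volume volume := by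
  refine ⟨(hX.prodMk hY).aemeasurable, (hX.prodMk hY').aemeasurable, ?_⟩
  rw [(indepFun_iff_map_prod_eq_prod_map_map hX.aemeasurable hY.aemeasurable).mp h1,
    (indepFun_iff_map_prod_eq_prod_map_map hX.aemeasurable hY'.aemeasurable).mp h2,
    hid.map_eq]

lemma aux_perm_matrix {m : ℕ} (σ : Equiv.Perm (Fin m)) :
    (Matrix.of fun i j => if σ i = j then (1:ℝ) else 0) ∈ Matrix.orthogonalGroup (Fin m) ℝ := by
  rw [Matrix.mem_orthogonalGroup_iff]
  ext i j
  simp only [Matrix.mul_apply, Matrix.star_eq_conjTranspose, Matrix.conjTranspose_apply,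
    Matrix.of_apply, Matrix.one_apply, star_trivial, ite_mul, one_mul, zero_mul,
    Matrix.transpose_apply]
  rw [Finset.sum_ite_eq Finset.univ (σ i) (fun j' => if σ j = j' then (1:ℝ) else 0)]
  simp [Equiv.apply_eq_iff_eq, eq_comm]

lemma aux_perm_mul {m k : ℕ} (σ : Equiv.Perm (Fin m)) (M : Matrix (Fin m) (Fin k) ℝ) :
    (Matrix.of fun i j => if σ i = j then (1:ℝ) else 0) * M = Matrix.of fun i j => M (σ i) j := by
  ext i j
  simp [Matrix.mul_apply, ite_mul, Finset.sum_ite_eq]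

/-- A random low-rank matrix `A = C P`, where `C` consists of the first `r` columns of a
Haar orthogonal matrix and `P` has iid entries independent of `C`, is row- and
column-exchangeable; moreover if the entries of `P` are centered with finite second moment
`s = E[P₁₁²]`, the fourth cross-moments of `A` factorize as
`E[A_{i_a,1} A_{i_b,1} A_{i_c,2} A_{i_d,2}] = s² Σ_{k,k'} E[C_{i_a,k} C_{i_b,k} C_{i_c,k'} C_{i_d,k'}]`. -/
theorem lowrank_pseudoiid
    {Ω : Type*} [MeasureSpace Ω] [IsProbabilityMeasure (volume : Measure Ω)]
    (m r n : ℕ) (hr : r ≤ m) (hr0 : 0 < r) (hn : 2 ≤ n)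
    (Q : Ω → Matrix (Fin m) (Fin m) ℝ) (hQmeas : Measurable Q)
    (hQorth : ∀ᵐ ω, Q ω ∈ Matrix.orthogonalGroup (Fin m) ℝ)
    (hQinv : ∀ R ∈ Matrix.orthogonalGroup (Fin m) ℝ,
      IdentDistrib (fun ω => R * Q ω) Q volume volume)
    (C : Ω → Matrix (Fin m) (Fin r) ℝ)
    (hC : ∀ ω, C ω = Matrix.of fun i k => Q ω i (Fin.castLE hr k))
    (P : Ω → Matrix (Fin r) (Fin n) ℝ) (hPmeas : Measurable P)
    (hindep : IndepFun Q P volume)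
    (hPiid : iIndepFun
      (fun p : Fin r × Fin n => fun ω => P ω p.1 p.2) volume)
    (hPid : ∀ p q : Fin r × Fin n,
      IdentDistrib (fun ω => P ω p.1 p.2) (fun ω => P ω q.1 q.2) volume volume)
    (A : Ω → Matrix (Fin m) (Fin n) ℝ) (hA : ∀ ω, A ω = C ω * P ω) :
    ((∀ σ : Equiv.Perm (Fin m),
        IdentDistrib (fun ω => (A ω).submatrix σ id) A volume volume) ∧
      (∀ τ : Equiv.Perm (Fin n),
        IdentDistrib (fun ω => (A ω).submatrix id τ) A volume volume)) ∧
    ((∀ k l, ∫ ω, P ω k l = 0) →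
      Integrable (fun ω => (P ω ⟨0, hr0⟩ ⟨0, by omega⟩) ^ 2) →
      ∀ i_a i_b i_c i_d : Fin m,
        ∫ ω, A ω i_a ⟨0, by omega⟩ * A ω i_b ⟨0, by omega⟩ *
            A ω i_c ⟨1, by omega⟩ * A ω i_d ⟨1, by omega⟩ =
          (∫ ω, (P ω ⟨0, hr0⟩ ⟨0, by omega⟩) ^ 2) ^ 2 *
            ∑ k : Fin r, ∑ k' : Fin r,
              ∫ ω, C ω i_a k * C ω i_b k * C ω i_c k' * C ω i_d k') := by
  classical
  refine ⟨?_, ?_⟩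
  · -- exchangeability
    set F : Matrix (Fin m) (Fin m) ℝ × Matrix (Fin r) (Fin n) ℝ → Matrix (Fin m) (Fin n) ℝ :=
      fun qp => (Matrix.of fun i k => qp.1 i (Fin.castLE hr k)) * qp.2 with hFdef
    have hF : Measurable F := by
      apply measurable_pi_lambda _ fun i => measurable_pi_lambda _ fun j => ?_
      have : (fun qp : Matrix (Fin m) (Fin m) ℝ × Matrix (Fin r) (Fin n) ℝ => F qp i j)
          = fun qp => ∑ k : Fin r, qp.1 i (Fin.castLE hr k) * qp.2 k j := by
        funext qp; simp [F, Matrix.mul_apply]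
      rw [this]
      exact Finset.measurable_sum _ fun k _ => by
        fun_prop
    have hAF : A = fun ω => F (Q ω, P ω) := by
      funext ω; rw [hA, hC]
    constructor
    · intro σ
      set R : Matrix (Fin m) (Fin m) ℝ := Matrix.of fun i j => if σ i = j then (1:ℝ) else 0
      have hRQmeas : Measurable fun ω => R * Q ω := by
        apply measurable_pi_lambda _ fun i => measurable_pi_lambda _ fun j => ?_
        have : (fun ω => (R * Q ω) i j) = fun ω => Q ω (σ i) j := by
          funext ω; rw [aux_perm_mul]; rfl
        rw [this]; exact hQmeas.eval.eval
      have hRmeas : Measurable fun q : Matrix (Fin m) (Fin m) ℝ => R * q := by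
        apply measurable_pi_lambda _ fun i => measurable_pi_lambda _ fun j => ?_
        have : (fun q : Matrix (Fin m) (Fin m) ℝ => (R * q) i j) = fun q => q (σ i) j := by
          funext q; rw [aux_perm_mul]; rfl
        rw [this]; exact (measurable_pi_apply _).eval
      have hRindep : IndepFun (fun ω => R * Q ω) P volume :=
        hindep.comp hRmeas measurable_id
      have hpair := aux_pair_fst hRQmeas hQmeas hPmeas (hQinv R (aux_perm_matrix σ))
        hRindep hindep
      have hcomp := hpair.comp hF
      have h1 : (fun ω => (A ω).submatrix σ id) = F ∘ fun ω => (R * Q ω, P ω) := by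
        funext ω
        show (A ω).submatrix σ id = F (R * Q ω, P ω)
        rw [hA, hC]
        show _ = (Matrix.of fun i k => (R * Q ω) i (Fin.castLE hr k)) * P ω
        rw [aux_perm_mul]
        ext i j
        simp [Matrix.mul_apply]
      have h2 : A = F ∘ fun ω => (Q ω, P ω) := hAF
      rw [h1, h2]
      exact hcomp
    · intro τ
      have hPid' := aux_col_perm hPmeas hPiid hPid τ
      have hφ : Measurable fun M : Matrix (Fin r) (Fin n) ℝ => M.submatrix id τ := by
        apply measurable_pi_lambda _ fun i => measurable_pi_lambda _ fun j => ?_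
        exact ((measurable_pi_apply (τ j)).comp (measurable_pi_apply i))
      have hP'meas : Measurable fun ω => (P ω).submatrix id τ := hφ.comp hPmeas
      have hP'indep : IndepFun Q (fun ω => (P ω).submatrix id τ) volume :=
        hindep.comp measurable_id hφ
      have hpair := aux_pair_snd hQmeas hP'meas hPmeas hPid' hP'indep hindep
      have hcomp := hpair.comp hF
      have h1 : (fun ω => (A ω).submatrix id τ) = F ∘ fun ω => (Q ω, (P ω).submatrix id τ) := by
        funext ω
        ext i j
        simp only [Function.comp_apply, Matrix.submatrix_apply, id_eq, hA, hC, F,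
          Matrix.mul_apply, Matrix.of_apply]
      have h2 : A = F ∘ fun ω => (Q ω, P ω) := hAF
      rw [h1, h2]
      exact hcomp

  · -- moment computation
    intro hcent hsq ia ib ic id
    set c0 : Fin n := ⟨0, by omega⟩ with hc0
    set c1 : Fin n := ⟨1, by omega⟩ with hc1
    set k0 : Fin r := ⟨0, hr0⟩ with hk0
    have hc01 : c0 ≠ c1 := by simp [hc0, hc1, Fin.ext_iff]
    set f : Fin r × Fin n → Ω → ℝ := fun p ω => P ω p.1 p.2 with hf
    set s : ℝ := ∫ ω, f (k0, c0) ω ^ 2 with hs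
    have hfmeas : ∀ p, Measurable (f p) := fun p => hPmeas.eval.eval
    have hmem0 : MemLp (f (k0, c0)) 2 volume := by
      rw [memLp_two_iff_integrable_sq (hfmeas _).aestronglyMeasurable]
      exact hsq
    have hmem : ∀ p, MemLp (f p) 2 volume := fun p => (hPid (k0, c0) p).memLp_snd hmem0
    have hfint : ∀ p, Integrable (f p) := fun p => (hmem p).integrable one_le_two
    have hsqint : ∀ p, Integrable (fun ω => f p ω ^ 2) := fun p =>
      (memLp_two_iff_integrable_sq (hfmeas p).aestronglyMeasurable).mp (hmem p)
    have hsqeq : ∀ p, (∫ ω, f p ω ^ 2) = s := fun p =>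
      ((hPid p (k0, c0)).comp (measurable_id.pow_const 2)).integral_eq
    have hpairint : ∀ (k1 k2 : Fin r) (c : Fin n),
        Integrable (fun ω => f (k1, c) ω * f (k2, c) ω) := by
      intro k1 k2 c
      by_cases h : k1 = k2
      · subst h
        have := hsqint (k1, c)
        simpa [pow_two] using this
      · exact (hPiid.indepFun (by simp [Prod.ext_iff, h] :
          ((k1, c) : Fin r × Fin n) ≠ (k2, c))).integrable_mul (hfint _) (hfint _)
    have hmulfun : ∀ (p q : Fin r × Fin n), (fun ω => f p ω * f q ω) = f p * f q :=
      fun _ _ => rfl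
    have hf0 : ∀ p : Fin r × Fin n, (∫ ω, f p ω) = 0 := fun p => hcent p.1 p.2
    have hpaireq : ∀ (k1 k2 : Fin r) (c : Fin n),
        (∫ ω, f (k1, c) ω * f (k2, c) ω) = if k1 = k2 then s else 0 := by
      intro k1 k2 c
      by_cases h : k1 = k2
      · subst h
        rw [if_pos rfl, ← hsqeq (k1, c)]
        congr 1; funext ω; ring
      · rw [if_neg h, hmulfun,
          (hPiid.indepFun (by simp [Prod.ext_iff, h] :
            ((k1, c) : Fin r × Fin n) ≠ (k2, c))).integral_mul_eq_mul_integral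
            (hfint _).aestronglyMeasurable (hfint _).aestronglyMeasurable, hf0, hf0, mul_zero]
    -- independence of the two column blocks
    have hne : ∀ (k1 k3 : Fin r), ((k1, c0) : Fin r × Fin n) ≠ (k3, c1) := by
      intro k1 k3
      simp [Prod.ext_iff, hc01]
    have hpp : ∀ k1 k2 k3 k4 : Fin r,
        IndepFun (f (k1, c0) * f (k2, c0)) (f (k3, c1) * f (k4, c1)) volume :=
      fun k1 k2 k3 k4 => hPiid.indepFun_mul_mul hfmeas (k1, c0) (k2, c0) (k3, c1) (k4, c1)
        (hne k1 k3) (hne k1 k4) (hne k2 k3) (hne k2 k4)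
    have hPprodint : ∀ k1 k2 k3 k4 : Fin r,
        Integrable (fun ω => (f (k1, c0) ω * f (k2, c0) ω) * (f (k3, c1) ω * f (k4, c1) ω)) := by
      intro k1 k2 k3 k4
      have := (hpp k1 k2 k3 k4).integrable_mul
        (by rw [← hmulfun]; exact hpairint k1 k2 c0)
        (by rw [← hmulfun]; exact hpairint k3 k4 c1)
      exact this
    have hPprodeq : ∀ k1 k2 k3 k4 : Fin r,
        (∫ ω, (f (k1, c0) ω * f (k2, c0) ω) * (f (k3, c1) ω * f (k4, c1) ω)) =
          (if k1 = k2 then s else 0) * (if k3 = k4 then s else 0) := by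
      intro k1 k2 k3 k4
      have h1 : (fun ω => (f (k1, c0) ω * f (k2, c0) ω) * (f (k3, c1) ω * f (k4, c1) ω)) =
          (f (k1, c0) * f (k2, c0)) * (f (k3, c1) * f (k4, c1)) := rfl
      rw [h1, (hpp k1 k2 k3 k4).integral_mul_eq_mul_integral
        (Integrable.aestronglyMeasurable (by rw [← hmulfun]; exact hpairint k1 k2 c0))
        (Integrable.aestronglyMeasurable (by rw [← hmulfun]; exact hpairint k3 k4 c1))]
      rw [show integral volume (f (k1, c0) * f (k2, c0)) = ∫ ω, f (k1, c0) ω * f (k2, c0) ω from rfl]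
      rw [show integral volume (f (k3, c1) * f (k4, c1)) = ∫ ω, f (k3, c1) ω * f (k4, c1) ω from rfl]
      rw [hpaireq, hpaireq]
    -- C-side: measurability, boundedness, integrability
    have hCmeas : ∀ (i : Fin m) (k : Fin r), Measurable fun ω => C ω i k := by
      intro i k
      have h : (fun ω => C ω i k) = fun ω => Q ω i (Fin.castLE hr k) := by
        funext ω; rw [hC]; rfl
      rw [h]; exact hQmeas.eval.eval
    have hCbd : ∀ (i : Fin m) (k : Fin r), ∀ᵐ ω, |C ω i k| ≤ 1 := by
      intro i k
      filter_upwards [hQorth] with ω hω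
      rw [hC]
      simp only [Matrix.of_apply]
      rw [Matrix.mem_orthogonalGroup_iff] at hω
      have h1 : (Q ω * star (Q ω)) i i = 1 := by
        rw [Matrix.star_eq_conjTranspose, Matrix.conjTranspose_eq_transpose_of_trivial, hω]
        simp [Matrix.one_apply]
      have h2 : ∑ j, Q ω i j * Q ω i j = 1 := by
        simpa [Matrix.mul_apply, Matrix.star_eq_conjTranspose,
          Matrix.conjTranspose_apply] using h1
      have h3 : Q ω i (Fin.castLE hr k) * Q ω i (Fin.castLE hr k) ≤ 1 := by
        rw [← h2]
        exact Finset.single_le_sum (f := fun j => Q ω i j * Q ω i j)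
          (fun j _ => mul_self_nonneg _) (Finset.mem_univ _)
      exact abs_le_one_iff_mul_self_le_one.mpr h3
    set Cp : Fin r → Fin r → Fin r → Fin r → Ω → ℝ :=
      fun k1 k2 k3 k4 ω => C ω ia k1 * C ω ib k2 * C ω ic k3 * C ω id k4 with hCp
    have hCpmeas : ∀ k1 k2 k3 k4, Measurable (Cp k1 k2 k3 k4) := fun k1 k2 k3 k4 =>
      (((hCmeas ia k1).mul (hCmeas ib k2)).mul (hCmeas ic k3)).mul (hCmeas id k4)
    have hCpbd : ∀ k1 k2 k3 k4, ∀ᵐ ω, ‖Cp k1 k2 k3 k4 ω‖ ≤ 1 := by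
      intro k1 k2 k3 k4
      filter_upwards [hCbd ia k1, hCbd ib k2, hCbd ic k3, hCbd id k4] with ω h1 h2 h3 h4
      rw [Real.norm_eq_abs]
      simp only [Cp, abs_mul]
      have h12 : |C ω ia k1| * |C ω ib k2| ≤ 1 := mul_le_one₀ h1 (abs_nonneg _) h2
      have h123 : |C ω ia k1| * |C ω ib k2| * |C ω ic k3| ≤ 1 :=
        mul_le_one₀ h12 (abs_nonneg _) h3
      exact mul_le_one₀ h123 (abs_nonneg _) h4
    have hCpint : ∀ k1 k2 k3 k4, Integrable (Cp k1 k2 k3 k4) := fun k1 k2 k3 k4 =>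
      Integrable.mono' (integrable_const 1) (hCpmeas k1 k2 k3 k4).aestronglyMeasurable
        (hCpbd k1 k2 k3 k4)
    set Pp : Fin r → Fin r → Fin r → Fin r → Ω → ℝ :=
      fun k1 k2 k3 k4 ω => (f (k1, c0) ω * f (k2, c0) ω) * (f (k3, c1) ω * f (k4, c1) ω)
      with hPp
    have hTint : ∀ k1 k2 k3 k4, Integrable (fun ω => Cp k1 k2 k3 k4 ω * Pp k1 k2 k3 k4 ω) :=
      fun k1 k2 k3 k4 => Integrable.bdd_mul (c := 1) (hPprodint k1 k2 k3 k4)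
        (hCpmeas k1 k2 k3 k4).aestronglyMeasurable (hCpbd k1 k2 k3 k4)
    have hCPindep : ∀ k1 k2 k3 k4,
        IndepFun (Cp k1 k2 k3 k4) (Pp k1 k2 k3 k4) volume := by
      intro k1 k2 k3 k4
      have ev : ∀ (i : Fin m) (c : Fin m), Measurable fun q : Matrix (Fin m) (Fin m) ℝ => q i c :=
        fun i c => (measurable_pi_apply i).eval
      have ev' : ∀ (k : Fin r) (c : Fin n), Measurable fun p : Matrix (Fin r) (Fin n) ℝ => p k c :=
        fun k c => (measurable_pi_apply k).eval
      have hφCm : Measurable (fun q : Matrix (Fin m) (Fin m) ℝ =>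
          q ia (Fin.castLE hr k1) * q ib (Fin.castLE hr k2) *
            q ic (Fin.castLE hr k3) * q id (Fin.castLE hr k4)) :=
        (((ev ia _).mul (ev ib _)).mul (ev ic _)).mul (ev id _)
      have hφPm : Measurable (fun p : Matrix (Fin r) (Fin n) ℝ =>
          (p k1 c0 * p k2 c0) * (p k3 c1 * p k4 c1)) :=
        ((ev' k1 c0).mul (ev' k2 c0)).mul ((ev' k3 c1).mul (ev' k4 c1))
      have h := hindep.comp hφCm hφPm
      have e1 : Cp k1 k2 k3 k4 = (fun q : Matrix (Fin m) (Fin m) ℝ =>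
          q ia (Fin.castLE hr k1) * q ib (Fin.castLE hr k2) *
            q ic (Fin.castLE hr k3) * q id (Fin.castLE hr k4)) ∘ Q := by
        funext ω
        simp only [hCp, Function.comp_apply]
        rw [hC]
        rfl
      rw [e1]
      exact h
    have hterm : ∀ k1 k2 k3 k4, (∫ ω, Cp k1 k2 k3 k4 ω * Pp k1 k2 k3 k4 ω) =
        (∫ ω, Cp k1 k2 k3 k4 ω) * ((if k1 = k2 then s else 0) * (if k3 = k4 then s else 0)) := by
      intro k1 k2 k3 k4
      have h1 : (fun ω => Cp k1 k2 k3 k4 ω * Pp k1 k2 k3 k4 ω) =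
          Cp k1 k2 k3 k4 * Pp k1 k2 k3 k4 := rfl
      rw [h1, (hCPindep k1 k2 k3 k4).integral_mul_eq_mul_integral (hCpint k1 k2 k3 k4).aestronglyMeasurable
        (by rw [show Pp k1 k2 k3 k4 = (f (k1, c0) * f (k2, c0)) * (f (k3, c1) * f (k4, c1))
              from rfl, ← hmulfun, ← hmulfun]
            exact (hPprodint k1 k2 k3 k4).aestronglyMeasurable)]
      congr 1
      rw [show integral volume (Pp k1 k2 k3 k4) =
        ∫ ω, (f (k1, c0) ω * f (k2, c0) ω) * (f (k3, c1) ω * f (k4, c1) ω) from rfl]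
      exact hPprodeq k1 k2 k3 k4
    -- pointwise expansion of the integrand
    have hptw : ∀ ω, A ω ia c0 * A ω ib c0 * A ω ic c1 * A ω id c1 =
        ∑ k4 : Fin r, ∑ k3 : Fin r, ∑ k2 : Fin r, ∑ k1 : Fin r,
          Cp k1 k2 k3 k4 ω * Pp k1 k2 k3 k4 ω := by
      intro ω
      simp only [hCp, hPp, hf, hA, Matrix.mul_apply]
      simp only [Finset.sum_mul, Finset.mul_sum]
      refine Finset.sum_congr rfl fun k1 _ => ?_
      refine Finset.sum_congr rfl fun k2 _ => ?_
      refine Finset.sum_congr rfl fun k3 _ => ?_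
      refine Finset.sum_congr rfl fun k4 _ => ?_
      ring
    have hswap : (∫ ω, A ω ia c0 * A ω ib c0 * A ω ic c1 * A ω id c1)
        = ∑ k4 : Fin r, ∑ k3 : Fin r, ∑ k2 : Fin r, ∑ k1 : Fin r,
            ∫ ω, Cp k1 k2 k3 k4 ω * Pp k1 k2 k3 k4 ω := by
      rw [show (fun ω => A ω ia c0 * A ω ib c0 * A ω ic c1 * A ω id c1)
          = fun ω => ∑ k4 : Fin r, ∑ k3 : Fin r, ∑ k2 : Fin r, ∑ k1 : Fin r,
            Cp k1 k2 k3 k4 ω * Pp k1 k2 k3 k4 ω from funext hptw]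
      rw [integral_finset_sum _ (fun k4 _ => integrable_finset_sum _ fun k3 _ =>
        integrable_finset_sum _ fun k2 _ => integrable_finset_sum _ fun k1 _ =>
        hTint k1 k2 k3 k4)]
      refine Finset.sum_congr rfl fun k4 _ => ?_
      rw [integral_finset_sum _ (fun k3 _ => integrable_finset_sum _ fun k2 _ =>
        integrable_finset_sum _ fun k1 _ => hTint k1 k2 k3 k4)]
      refine Finset.sum_congr rfl fun k3 _ => ?_
      rw [integral_finset_sum _ (fun k2 _ => integrable_finset_sum _ fun k1 _ =>
        hTint k1 k2 k3 k4)]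
      refine Finset.sum_congr rfl fun k2 _ => ?_
      exact integral_finset_sum _ (fun k1 _ => hTint k1 k2 k3 k4)
    rw [hswap]
    simp only [hterm]
    simp only [mul_ite, ite_mul, mul_zero, zero_mul, Finset.sum_ite_eq', Finset.mem_univ,
      if_true, Finset.sum_ite_irrel, Finset.sum_const_zero]
    rw [Finset.sum_comm]
    rw [pow_two, Finset.mul_sum]
    refine Finset.sum_congr rfl fun k _ => ?_
    rw [Finset.mul_sum]
    refine Finset.sum_congr rfl fun k' _ => ?_
    simp only [hCp]
    ring
end
end
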